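/- arXiv:1811.05676 — 3 statements merged into one kernel-verified Lean document; each statement's English description precedes it below -/
import Mathlib

section
/- Let N be a prime number and ∅ ≠ u ⊆ {1,…,s}. Define ē²_u(N) := (1/N²) ∑_{k=0}^{N-1} ∑_{k'=0}^{N-1} (X_{N;k,k'} + J_{N;k,k'})^{|u|}, where X_{N;k,k'} := (1/(2(N-1))) ∑_{z=1}^{N-1} B₂({(k-k')z/N}) and J_{N;k,k'} := (1/(N-1)) ∑_{z=1}^{N-1} ({kz/N} - 1/2)({k'z/N} - 1/2). Then ē²_u(N) ≤ c_u/N + (1/N²) ∑_{k=1}^{N-1} ∑_{k'=1}^{N-1} (J_{N;k,k'})^{|u|}, where c_u := 2/3^{|u|} + 1/4^{|u|}. -/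
open Finset Real Filter

/-- The Bernoulli polynomial of degree 2, `B₂(t) = t² - t + 1/6`. -/
noncomputable def B2 (t : ℝ) : ℝ := t ^ 2 - t + 1 / 6

/-- `X_{N;k,k'} = (1/(2(N-1))) ∑_{z=1}^{N-1} B₂({(k-k')z/N})`. -/
noncomputable def Xq (N k k' : ℕ) : ℝ :=
  (1 / (2 * ((N : ℝ) - 1))) *
    ∑ z ∈ Finset.Icc 1 (N - 1), B2 (Int.fract ((((k : ℝ) - (k' : ℝ)) * z) / N))

/-- `J_{N;k,k'} = (1/(N-1)) ∑_{z=1}^{N-1} ({kz/N} - 1/2)({k'z/N} - 1/2)`. -/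
noncomputable def Jq (N k k' : ℕ) : ℝ :=
  (1 / ((N : ℝ) - 1)) *
    ∑ z ∈ Finset.Icc 1 (N - 1),
      (Int.fract ((k : ℝ) * z / N) - 1 / 2) * (Int.fract ((k' : ℝ) * z / N) - 1 / 2)

section aux

lemma sum_Icc_id_real (n : ℕ) : ∑ a ∈ Finset.Icc 1 n, (a:ℝ) = n*(n+1)/2 := by
  induction n with
  | zero => simp
  | succ n ih =>
    rw [Finset.sum_Icc_succ_top (by omega)]
    push_cast
    rw [ih]; ring

lemma sum_Icc_sq_real (n : ℕ) : ∑ a ∈ Finset.Icc 1 n, (a:ℝ)^2 = n*(n+1)*(2*n+1)/6 := by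
  induction n with
  | zero => simp
  | succ n ih =>
    rw [Finset.sum_Icc_succ_top (by omega)]
    push_cast
    rw [ih]; ring

lemma nat_le_pow43 (m : ℕ) : (m:ℝ) ≤ 3*(4/3)^m := by
  induction m with
  | zero => norm_num
  | succ m ih =>
    have h1 : (1:ℝ) ≤ (4/3)^m := one_le_pow₀ (by norm_num)
    push_cast
    rw [pow_succ]
    nlinarith

lemma pow_le_abs_pow (x : ℝ) (m : ℕ) : x^m ≤ |x|^m := by
  rw [← abs_pow]; exact le_abs_self _

lemma sum_fract_reindex {N : ℕ} (hN : N.Prime) {c : ℤ} (hc : ¬ (N:ℤ) ∣ c) (f : ℝ → ℝ) :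
    ∑ z ∈ Finset.Icc 1 (N-1), f (Int.fract (((c * (z:ℕ) : ℤ) : ℝ) / N))
      = ∑ a ∈ Finset.Icc 1 (N-1), f ((a:ℝ)/N) := by
  have hp : Prime (N:ℤ) := Nat.prime_iff_prime_int.mp hN
  have hN1 : 1 < N := hN.one_lt
  have hNz : (N:ℤ) ≠ 0 := by exact_mod_cast (by omega : N ≠ 0)
  have hNpos : (0:ℤ) < N := by exact_mod_cast (by omega : 0 < N)
  have hndvd : ∀ z : ℕ, z ∈ Finset.Icc 1 (N-1) → ¬ (N:ℤ) ∣ (z:ℤ) := by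
    intro z hz hdvd
    simp only [Finset.mem_Icc] at hz
    have h2 : N ∣ z := by exact_mod_cast hdvd
    have := Nat.le_of_dvd (by omega) h2
    omega
  have hmem : ∀ z ∈ Finset.Icc 1 (N-1), ((c * (z:ℤ)) % (N:ℤ)).toNat ∈ Finset.Icc 1 (N-1) := by
    intro z hz
    have h0 : 0 ≤ (c * (z:ℤ)) % N := Int.emod_nonneg _ hNz
    have h1 : (c * (z:ℤ)) % N < N := Int.emod_lt_of_pos _ hNpos
    have h2 : (c * (z:ℤ)) % N ≠ 0 := by
      intro h
      rcases hp.dvd_mul.mp (Int.dvd_of_emod_eq_zero h) with h' | h'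
      · exact hc h'
      · exact hndvd z hz h'
    simp only [Finset.mem_Icc]
    omega
  have hinj : ∀ (z₁ : ℕ) (h₁ : z₁ ∈ Finset.Icc 1 (N-1)) (z₂ : ℕ)
      (h₂ : z₂ ∈ Finset.Icc 1 (N-1)),
      ((c * (z₁:ℤ)) % (N:ℤ)).toNat = ((c * (z₂:ℤ)) % (N:ℤ)).toNat → z₁ = z₂ := by
    intro z₁ h₁ z₂ h₂ heq
    have h0a : 0 ≤ (c * (z₁:ℤ)) % N := Int.emod_nonneg _ hNz
    have h0b : 0 ≤ (c * (z₂:ℤ)) % N := Int.emod_nonneg _ hNz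
    have heq' : (c * (z₁:ℤ)) % N = (c * (z₂:ℤ)) % N := by omega
    have hd : (N:ℤ) ∣ c * ((z₁:ℤ) - z₂) := by
      have h3 : (c * (z₁:ℤ) - c * (z₂:ℤ)) % N = 0 :=
        Int.emod_eq_emod_iff_emod_sub_eq_zero.mp heq'
      have h4 := Int.dvd_of_emod_eq_zero h3
      convert h4 using 1; ring
    rcases hp.dvd_mul.mp hd with h' | h'
    · exact absurd h' hc
    · simp only [Finset.mem_Icc] at h₁ h₂
      have : (z₁:ℤ) - z₂ = 0 := Int.eq_zero_of_abs_lt_dvd h' (by rw [abs_lt]; omega)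
      omega
  refine Finset.sum_bij (fun z _ => ((c * (z:ℤ)) % (N:ℤ)).toNat) hmem hinj ?_ ?_
  · intro b hb
    have := Finset.surj_on_of_inj_on_of_card_le
      (fun z (hz : z ∈ Finset.Icc 1 (N-1)) => ((c * (z:ℤ)) % (N:ℤ)).toNat)
      hmem (fun a₁ a₂ ha₁ ha₂ h => hinj a₁ ha₁ a₂ ha₂ h) le_rfl b hb
    obtain ⟨a, ha, hab⟩ := this
    exact ⟨a, ha, hab.symm⟩
  · intro z hz
    have h0 : 0 ≤ (c * (z:ℤ)) % N := Int.emod_nonneg _ hNz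
    rw [Int.fract_div_intCast_eq_div_intCast_mod]
    congr 2
    exact_mod_cast (Int.toNat_of_nonneg h0).symm

section vals
variable {N : ℕ}

lemma cast_pred (hN2 : 2 ≤ N) : ((N-1 : ℕ) : ℝ) = (N:ℝ) - 1 := by
  have h1 : (1:ℕ) ≤ N := by omega
  push_cast [h1]
  ring

lemma card_I : (Finset.Icc 1 (N-1)).card = N - 1 := by
  rw [Nat.card_Icc]; omega

lemma sum_B2_val (hN2 : 2 ≤ N) :
    ∑ a ∈ Finset.Icc 1 (N-1), B2 ((a:ℝ)/N) = -(((N:ℝ)-1)/(6*N)) := by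
  have hN0 : (N:ℝ) ≠ 0 := by positivity
  have key : ∀ a ∈ Finset.Icc 1 (N-1), B2 ((a:ℝ)/N)
      = (a:ℝ)^2 * (1/(N:ℝ)^2) - (a:ℝ) * (1/(N:ℝ)) + 1/6 := by
    intro a _; unfold B2; field_simp
  rw [Finset.sum_congr rfl key]
  rw [Finset.sum_add_distrib, Finset.sum_sub_distrib, ← Finset.sum_mul, ← Finset.sum_mul,
    Finset.sum_const, card_I, sum_Icc_id_real, sum_Icc_sq_real, cast_pred hN2]
  push_cast
  field_simp
  rw [nsmul_eq_mul, cast_pred hN2]; ring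

lemma sum_lin_val (hN2 : 2 ≤ N) :
    ∑ a ∈ Finset.Icc 1 (N-1), ((a:ℝ)/N - 1/2) = 0 := by
  have hN0 : (N:ℝ) ≠ 0 := by positivity
  rw [Finset.sum_sub_distrib, ← Finset.sum_div, Finset.sum_const, card_I,
    sum_Icc_id_real, cast_pred hN2]
  field_simp
  rw [nsmul_eq_mul, cast_pred hN2]; ring

lemma sum_sq_val (hN2 : 2 ≤ N) :
    ∑ a ∈ Finset.Icc 1 (N-1), ((a:ℝ)/N - 1/2)^2 = ((N:ℝ)-1)*((N:ℝ)-2)/(12*N) := by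
  have hN0 : (N:ℝ) ≠ 0 := by positivity
  have key : ∀ a ∈ Finset.Icc 1 (N-1), ((a:ℝ)/N - 1/2)^2
      = (a:ℝ)^2 * (1/(N:ℝ)^2) - (a:ℝ) * (1/(N:ℝ)) + 1/4 := by
    intro a _; field_simp; ring
  rw [Finset.sum_congr rfl key]
  rw [Finset.sum_add_distrib, Finset.sum_sub_distrib, ← Finset.sum_mul, ← Finset.sum_mul,
    Finset.sum_const, card_I, sum_Icc_id_real, sum_Icc_sq_real, cast_pred hN2]
  push_cast
  field_simp
  rw [nsmul_eq_mul, cast_pred hN2]; ring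

lemma Xq_diag (hN2 : 2 ≤ N) (k : ℕ) : Xq N k k = 1/12 := by
  have hNR : (2:ℝ) ≤ (N:ℝ) := by exact_mod_cast hN2
  have hN1 : (N:ℝ) - 1 ≠ 0 := by linarith
  unfold Xq
  have h : ∀ z ∈ Finset.Icc 1 (N-1), B2 (Int.fract ((((k:ℝ) - (k:ℝ)) * z) / N)) = 1/6 := by
    intro z _
    simp only [sub_self, zero_mul, zero_div, Int.fract_zero]
    unfold B2; norm_num
  rw [Finset.sum_congr rfl h, Finset.sum_const, card_I, nsmul_eq_mul, cast_pred hN2]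
  field_simp
  ring

lemma ndvd_of_ne (hN : N.Prime) {k k' : ℕ} (hk : k < N) (hk' : k' < N) (hkk : k ≠ k') :
    ¬ (N:ℤ) ∣ ((k:ℤ) - k') := by
  intro h
  have : (k:ℤ) - k' = 0 := Int.eq_zero_of_abs_lt_dvd h (by rw [abs_lt]; omega)
  omega

lemma ndvd_of_mem (hN : N.Prime) {k : ℕ} (hk : k ∈ Finset.Icc 1 (N-1)) :
    ¬ (N:ℤ) ∣ (k:ℤ) := by
  simp only [Finset.mem_Icc] at hk
  intro h
  have h2 : N ∣ k := by exact_mod_cast h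
  have := Nat.le_of_dvd (by omega) h2
  have := hN.two_le
  omega

lemma Xq_off (hN : N.Prime) {k k' : ℕ} (hk : k < N) (hk' : k' < N) (hkk : k ≠ k') :
    Xq N k k' = -(1/(12*(N:ℝ))) := by
  have hN2 : 2 ≤ N := hN.two_le
  have hNR : (2:ℝ) ≤ (N:ℝ) := by exact_mod_cast hN2
  have hN0 : (N:ℝ) ≠ 0 := by positivity
  have hN1 : (N:ℝ) - 1 ≠ 0 := by linarith
  have hc := ndvd_of_ne hN hk hk' hkk
  unfold Xq
  have hrw : ∀ z ∈ Finset.Icc 1 (N-1),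
      B2 (Int.fract ((((k:ℝ) - (k':ℝ)) * z) / N))
        = B2 (Int.fract (((((k:ℤ) - k') * (z:ℕ) : ℤ) : ℝ) / N)) := by
    intro z _
    congr 2
    push_cast
    ring
  rw [Finset.sum_congr rfl hrw, sum_fract_reindex hN hc B2, sum_B2_val hN2]
  field_simp
  ring

lemma Jq_diag (hN : N.Prime) {k : ℕ} (hk : k ∈ Finset.Icc 1 (N-1)) :
    Jq N k k = ((N:ℝ)-2)/(12*(N:ℝ)) := by
  have hN2 : 2 ≤ N := hN.two_le
  have hNR : (2:ℝ) ≤ (N:ℝ) := by exact_mod_cast hN2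
  have hN0 : (N:ℝ) ≠ 0 := by positivity
  have hN1 : (N:ℝ) - 1 ≠ 0 := by linarith
  have hc : ¬ (N:ℤ) ∣ ((k:ℕ):ℤ) := ndvd_of_mem hN hk
  have h2 := sum_fract_reindex hN hc (fun t => (t - 1/2)^2)
  unfold Jq
  have hrw : ∀ z ∈ Finset.Icc 1 (N-1),
      (Int.fract ((k:ℝ) * z / N) - 1/2) * (Int.fract ((k:ℝ) * z / N) - 1/2)
        = (Int.fract ((((k:ℤ) * (z:ℕ) : ℤ) : ℝ) / N) - 1/2)^2 := by
    intro z _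
    have hcast : ((k:ℝ) * z / N) = ((((k:ℤ) * (z:ℕ) : ℤ) : ℝ) / N) := by push_cast; ring
    rw [hcast]; ring
  rw [Finset.sum_congr rfl hrw, h2, sum_sq_val hN2]
  field_simp

lemma Jq_comm (k k' : ℕ) : Jq N k k' = Jq N k' k := by
  unfold Jq
  congr 1
  exact Finset.sum_congr rfl fun z _ => mul_comm _ _

lemma Jq_zero_left (hN : N.Prime) {k' : ℕ} (hk' : k' ∈ Finset.Icc 1 (N-1)) :
    Jq N 0 k' = 0 := by
  have hN2 : 2 ≤ N := hN.two_le
  have hc : ¬ (N:ℤ) ∣ ((k':ℕ):ℤ) := ndvd_of_mem hN hk'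
  have h2 := sum_fract_reindex hN hc (fun t => t - 1/2)
  unfold Jq
  have hrw : ∀ z ∈ Finset.Icc 1 (N-1),
      (Int.fract (((0:ℕ):ℝ) * z / N) - 1/2) * (Int.fract ((k':ℝ) * z / N) - 1/2)
        = (-(1/2)) * (Int.fract ((((k':ℤ) * (z:ℕ) : ℤ) : ℝ) / N) - 1/2) := by
    intro z _
    have hcast : ((k':ℝ) * z / N) = ((((k':ℤ) * (z:ℕ) : ℤ) : ℝ) / N) := by push_cast; ring
    rw [hcast]
    norm_num
  rw [Finset.sum_congr rfl hrw, ← Finset.mul_sum, h2, sum_lin_val hN2]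
  ring


end vals

section bounds
variable {N : ℕ}

lemma abs_fract_half (t : ℝ) : |Int.fract t - 1/2| ≤ 1/2 := by
  have h0 := Int.fract_nonneg t
  have h1 := Int.fract_lt_one t
  rw [abs_le]; constructor <;> linarith

lemma abs_B2_fract (t : ℝ) : |B2 (Int.fract t)| ≤ 1/6 := by
  have h0 := Int.fract_nonneg t
  have h1 := Int.fract_lt_one t
  unfold B2
  rw [abs_le]; constructor <;> nlinarith [sq_nonneg (Int.fract t - 1/2)]

lemma abs_Xq_le (hN2 : 2 ≤ N) (k k' : ℕ) : |Xq N k k'| ≤ 1/12 := by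
  have hNR : (2:ℝ) ≤ (N:ℝ) := by exact_mod_cast hN2
  have hpos : (0:ℝ) < (N:ℝ) - 1 := by linarith
  unfold Xq
  rw [abs_mul]
  have h1 : |∑ z ∈ Finset.Icc 1 (N-1), B2 (Int.fract ((((k:ℝ) - (k':ℝ)) * z) / N))|
      ≤ ((N:ℝ)-1) * (1/6) := by
    calc |∑ z ∈ Finset.Icc 1 (N-1), B2 (Int.fract ((((k:ℝ) - (k':ℝ)) * z) / N))|
        ≤ ∑ z ∈ Finset.Icc 1 (N-1), |B2 (Int.fract ((((k:ℝ) - (k':ℝ)) * z) / N))| :=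
          Finset.abs_sum_le_sum_abs _ _
      _ ≤ (Finset.Icc 1 (N-1)).card • (1/6 : ℝ) :=
          Finset.sum_le_card_nsmul _ _ _ (fun z _ => abs_B2_fract _)
      _ = ((N:ℝ)-1) * (1/6) := by rw [nsmul_eq_mul, card_I, cast_pred hN2]
  have h2 : |1/(2*((N:ℝ)-1))| = 1/(2*((N:ℝ)-1)) := abs_of_pos (by positivity)
  rw [h2]
  calc 1/(2*((N:ℝ)-1)) * |∑ z ∈ Finset.Icc 1 (N-1), B2 (Int.fract ((((k:ℝ) - (k':ℝ)) * z) / N))|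
      ≤ 1/(2*((N:ℝ)-1)) * (((N:ℝ)-1) * (1/6)) := by
        apply mul_le_mul_of_nonneg_left h1 (by positivity)
    _ = 1/12 := by field_simp; ring
lemma abs_Jq_le_of (hN2 : 2 ≤ N) {k k' : ℕ} {C : ℝ}
    (h : ∀ z ∈ Finset.Icc 1 (N-1),
      |(Int.fract ((k:ℝ) * z / N) - 1/2) * (Int.fract ((k':ℝ) * z / N) - 1/2)| ≤ C) :
    |Jq N k k'| ≤ C := by
  have hNR : (2:ℝ) ≤ (N:ℝ) := by exact_mod_cast hN2
  have hpos : (0:ℝ) < (N:ℝ) - 1 := by linarith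
  unfold Jq
  rw [abs_mul, abs_of_pos (show (0:ℝ) < 1/((N:ℝ)-1) by positivity)]
  have h1 : |∑ z ∈ Finset.Icc 1 (N-1),
      (Int.fract ((k:ℝ) * z / N) - 1/2) * (Int.fract ((k':ℝ) * z / N) - 1/2)|
      ≤ ((N:ℝ)-1) * C := by
    calc |∑ z ∈ Finset.Icc 1 (N-1),
        (Int.fract ((k:ℝ) * z / N) - 1/2) * (Int.fract ((k':ℝ) * z / N) - 1/2)|
        ≤ ∑ z ∈ Finset.Icc 1 (N-1),
          |(Int.fract ((k:ℝ) * z / N) - 1/2) * (Int.fract ((k':ℝ) * z / N) - 1/2)| :=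
          Finset.abs_sum_le_sum_abs _ _
      _ ≤ (Finset.Icc 1 (N-1)).card • C := Finset.sum_le_card_nsmul _ _ _ h
      _ = ((N:ℝ)-1) * C := by rw [nsmul_eq_mul, card_I, cast_pred hN2]
  calc 1/((N:ℝ)-1) * |∑ z ∈ Finset.Icc 1 (N-1),
        (Int.fract ((k:ℝ) * z / N) - 1/2) * (Int.fract ((k':ℝ) * z / N) - 1/2)|
      ≤ 1/((N:ℝ)-1) * (((N:ℝ)-1) * C) := by
        apply mul_le_mul_of_nonneg_left h1 (by positivity)
    _ = C := by field_simp

lemma abs_Jq_le_s3 (hN2 : 2 ≤ N) (k k' : ℕ) : |Jq N k k'| ≤ 1/4 := by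
  apply abs_Jq_le_of hN2
  intro z _
  rw [abs_mul]
  calc |Int.fract ((k:ℝ) * z / N) - 1/2| * |Int.fract ((k':ℝ) * z / N) - 1/2|
      ≤ (1/2) * (1/2) :=
        mul_le_mul (abs_fract_half _) (abs_fract_half _) (abs_nonneg _) (by norm_num)
    _ = 1/4 := by norm_num

lemma fract_tight (hN : N.Prime) {k z : ℕ} (hk : k ∈ Finset.Icc 1 (N-1))
    (hz : z ∈ Finset.Icc 1 (N-1)) :
    |Int.fract ((k:ℝ) * z / N) - 1/2| ≤ 1/2 - 1/(N:ℝ) := by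
  have hN2 : 2 ≤ N := hN.two_le
  have hNR : (2:ℝ) ≤ (N:ℝ) := by exact_mod_cast hN2
  have hN0 : (0:ℝ) < (N:ℝ) := by linarith
  simp only [Finset.mem_Icc] at hk hz
  have hcast : (k:ℝ) * z = ((k*z : ℕ):ℝ) := by push_cast; ring
  rw [hcast, Int.fract_div_natCast_eq_div_natCast_mod]
  have hmod1 : 1 ≤ (k*z) % N := by
    rcases Nat.eq_zero_or_pos ((k*z) % N) with h | h
    · exfalso
      have hd : N ∣ k*z := Nat.dvd_of_mod_eq_zero h
      rcases (Nat.Prime.dvd_mul hN).mp hd with h' | h'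
      · have := Nat.le_of_dvd (by omega) h'; omega
      · have := Nat.le_of_dvd (by omega) h'; omega
    · omega
  have hmod2 : (k*z) % N ≤ N - 1 := by
    have := Nat.mod_lt (k*z) (show 0 < N by omega); omega
  have c1 : (1:ℝ) ≤ ((k*z % N : ℕ):ℝ) := by exact_mod_cast hmod1
  have c2 : ((k*z % N : ℕ):ℝ) ≤ (N:ℝ) - 1 := by
    have h := (Nat.cast_le (α := ℝ)).mpr hmod2
    rwa [cast_pred hN2] at h
  have h1 : (1:ℝ)/N ≤ ((k*z % N : ℕ):ℝ)/N := by gcongr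
  have h2 : ((k*z % N : ℕ):ℝ)/N ≤ ((N:ℝ)-1)/N := by gcongr
  have h3 : ((N:ℝ)-1)/N = 1 - 1/N := by field_simp
  rw [abs_le]
  constructor <;> [linarith [h1]; linarith [h2, h3.le, h3.ge]]

lemma abs_Jq_tight (hN : N.Prime) {k k' : ℕ} (hk : k ∈ Finset.Icc 1 (N-1))
    (hk' : k' ∈ Finset.Icc 1 (N-1)) :
    |Jq N k k'| ≤ (1/2 - 1/(N:ℝ))^2 := by
  have hN2 : 2 ≤ N := hN.two_le
  apply abs_Jq_le_of hN2
  intro z hz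
  rw [abs_mul, sq]
  exact mul_le_mul (fract_tight hN hk hz) (fract_tight hN hk' hz) (abs_nonneg _)
    (by
      have hNR : (2:ℝ) ≤ (N:ℝ) := by exact_mod_cast hN2
      have : 1/(N:ℝ) ≤ 1/2 := by
        rw [div_le_div_iff₀ (by linarith) (by norm_num)]; linarith
      linarith)

lemma abs_pow_sub_pow {a b M : ℝ} (m : ℕ) (ha : |a| ≤ M) (hb : |b| ≤ M) :
    |a^m - b^m| ≤ (m:ℝ) * M^(m-1) * |a - b| := by
  have hM : 0 ≤ M := (abs_nonneg a).trans ha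
  rw [← geom_sum₂_mul a b m, abs_mul]
  have key : |∑ i ∈ Finset.range m, a^i * b^(m-1-i)| ≤ (m:ℝ) * M^(m-1) := by
    calc |∑ i ∈ Finset.range m, a^i * b^(m-1-i)|
        ≤ ∑ i ∈ Finset.range m, |a^i * b^(m-1-i)| := Finset.abs_sum_le_sum_abs _ _
      _ ≤ ∑ _i ∈ Finset.range m, M^(m-1) := by
          apply Finset.sum_le_sum
          intro i hi
          rw [abs_mul, abs_pow, abs_pow]
          calc |a|^i * |b|^(m-1-i)
              ≤ M^i * M^(m-1-i) := by
                apply mul_le_mul (pow_le_pow_left₀ (abs_nonneg _) ha i)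
                  (pow_le_pow_left₀ (abs_nonneg _) hb _) (by positivity) (by positivity)
            _ = M^(m-1) := by
                rw [← pow_add]
                congr 1
                simp only [Finset.mem_range] at hi
                omega
      _ = (m:ℝ) * M^(m-1) := by rw [Finset.sum_const, Finset.card_range, nsmul_eq_mul]
  exact mul_le_mul_of_nonneg_right key (abs_nonneg _)

lemma final_arith (x : ℝ) (hx : 2 ≤ x) (m : ℕ) (hm : 1 ≤ m) :
    (1/3:ℝ)^m + 2*((x-1) * (1/(12*x))^m) + (x-1)*((1/6:ℝ)^m)
      + (x-1)*((x-1) * ((m:ℝ) * (1/4:ℝ)^(m-1) * (1/(12*x))))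
      ≤ (2/(3:ℝ)^m + 1/(4:ℝ)^m) * x := by
  have hx0 : (0:ℝ) < x := by linarith
  set a := (1/3:ℝ)^m with ha
  set b := (1/4:ℝ)^m with hb
  have ha0 : 0 < a := by positivity
  have hb0 : 0 < b := by positivity
  have e1 : (1/(12*x))^m ≤ (1/24:ℝ)^m := by
    apply pow_le_pow_left₀ (by positivity)
    rw [div_le_div_iff₀ (by positivity) (by norm_num)]
    linarith
  have e2 : (1/24:ℝ)^m ≤ (1/2) * a := by
    have h24 : (1/24:ℝ)^m = (1/8)^m * (1/3)^m := by rw [← mul_pow]; norm_num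
    have h8 : (1/8:ℝ)^m ≤ 1/8 := pow_le_of_le_one (by norm_num) (by norm_num) (by omega)
    have h8' : (0:ℝ) ≤ (1/8:ℝ)^m := by positivity
    rw [h24, ← ha]
    nlinarith
  have t1 : 2*((x-1) * (1/(12*x))^m) ≤ (x-1) * a := by
    have e12 : (1/(12*x))^m ≤ a/2 := by linarith [e1, e2]
    nlinarith [e12, pow_nonneg (show (0:ℝ) ≤ 1/(12*x) by positivity) m]
  have t2 : (x-1)*((1/6:ℝ)^m) ≤ x * b := by
    have h6 : (1/6:ℝ)^m ≤ b := by
      rw [hb]; exact pow_le_pow_left₀ (by norm_num) (by norm_num) m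
    have h6' : (0:ℝ) ≤ (1/6:ℝ)^m := by positivity
    nlinarith
  have key1 : (m:ℝ) * (1/4:ℝ)^(m-1) ≤ 12 * a := by
    have hp : (1/4:ℝ)^(m-1) = 4 * b := by
      have hs : (1/4:ℝ)^(m-1) * (1/4) = (1/4)^m := by
        rw [← pow_succ]; congr 1; omega
      rw [hb]; linarith
    have hmm : (m:ℝ) ≤ 3*(4/3)^m := nat_le_pow43 m
    have hq : (4/3:ℝ)^m * (1/4)^m = (1/3)^m := by rw [← mul_pow]; norm_num
    calc (m:ℝ) * (1/4:ℝ)^(m-1) = (m:ℝ) * (4*b) := by rw [hp]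
      _ ≤ (3*(4/3)^m) * (4*b) := by
          apply mul_le_mul_of_nonneg_right hmm (by positivity)
      _ = 12*((4/3)^m * (1/4)^m) := by rw [hb]; ring
      _ = 12*a := by rw [hq, ha]
  have t3 : (x-1)*((x-1) * ((m:ℝ) * (1/4:ℝ)^(m-1) * (1/(12*x)))) ≤ x * a := by
    have hxm : (0:ℝ) ≤ (m:ℝ) * (1/4:ℝ)^(m-1) := by positivity
    have hinv : (0:ℝ) ≤ 1/(12*x) := by positivity
    have inner : (m:ℝ) * (1/4:ℝ)^(m-1) * (1/(12*x)) ≤ (12*a) * (1/(12*x)) :=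
      mul_le_mul_of_nonneg_right key1 hinv
    have inner2 : (x-1) * ((m:ℝ) * (1/4:ℝ)^(m-1) * (1/(12*x)))
        ≤ x * ((12*a) * (1/(12*x))) :=
      mul_le_mul (by linarith) inner (by positivity) hx0.le
    have step : (x-1)*((x-1) * ((m:ℝ) * (1/4:ℝ)^(m-1) * (1/(12*x))))
        ≤ x*(x * ((12*a) * (1/(12*x)))) :=
      mul_le_mul (by linarith) inner2 (mul_nonneg (by linarith) (by positivity)) hx0.le
    have : x*(x * ((12*a) * (1/(12*x)))) = x * a := by field_simp
    linarith
  have hra : 2/(3:ℝ)^m = 2 * a := by rw [ha, div_pow, one_pow]; ring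
  have hrb : 1/(4:ℝ)^m = b := by rw [hb, div_pow, one_pow]
  have final : a + (x-1)*a + x*b + x*a = (2*a + b) * x := by ring
  rw [hra, hrb]
  nlinarith [t1, t2, t3]


end bounds

end aux

/-- `ē²_u(N) ≤ c_u/N + (1/N²) ∑_{k=1}^{N-1} ∑_{k'=1}^{N-1} J_{N;k,k'}^{|u|}`
with `c_u = 2/3^{|u|} + 1/4^{|u|}`. -/
theorem avg_e2u_le (N s : ℕ) (hN : N.Prime) (u : Finset ℕ)
    (hus : u ⊆ Finset.Icc 1 s) (hu : u.Nonempty) :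
    (1 / (N : ℝ) ^ 2) *
        ∑ k ∈ Finset.range N, ∑ k' ∈ Finset.range N, (Xq N k k' + Jq N k k') ^ u.card
      ≤ (2 / (3 : ℝ) ^ u.card + 1 / (4 : ℝ) ^ u.card) / N +
        (1 / (N : ℝ) ^ 2) *
          ∑ k ∈ Finset.Icc 1 (N - 1), ∑ k' ∈ Finset.Icc 1 (N - 1), (Jq N k k') ^ u.card := by
  set m := u.card with hm_def
  have hm : 1 ≤ m := Finset.card_pos.mpr hu
  have hN2 : 2 ≤ N := hN.two_le
  have hNR : (2:ℝ) ≤ (N:ℝ) := by exact_mod_cast hN2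
  have hN0 : (0:ℝ) < (N:ℝ) := by linarith
  set I := Finset.Icc 1 (N-1) with hI
  have hmemI : ∀ k ∈ I, 1 ≤ k ∧ k ≤ N - 1 := by
    intro k hk; rw [hI, Finset.mem_Icc] at hk; exact hk
  have hinv_pos : (0:ℝ) < 1/(12*(N:ℝ)) := by positivity
  -- zero-zero term
  have e0 : (Xq N 0 0 + Jq N 0 0)^m ≤ (1/3:ℝ)^m := by
    refine (pow_le_abs_pow _ m).trans (pow_le_pow_left₀ (abs_nonneg _) ?_ m)
    calc |Xq N 0 0 + Jq N 0 0| ≤ |Xq N 0 0| + |Jq N 0 0| := abs_add_le _ _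
      _ ≤ 1/12 + 1/4 := add_le_add (abs_Xq_le hN2 0 0) (abs_Jq_le_s3 hN2 0 0)
      _ = 1/3 := by norm_num
  -- zero row
  have erow : ∀ k' ∈ I, (Xq N 0 k' + Jq N 0 k')^m ≤ (1/(12*(N:ℝ)))^m := by
    intro k' hk'
    obtain ⟨h1, h2⟩ := hmemI k' hk'
    rw [Xq_off hN (show 0 < N by omega) (show k' < N by omega) (by omega),
      Jq_zero_left hN (hI ▸ hk')]
    calc (-(1/(12*(N:ℝ))) + 0)^m ≤ |(-(1/(12*(N:ℝ))) + 0)|^m := pow_le_abs_pow _ m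
      _ = (1/(12*(N:ℝ)))^m := by rw [add_zero, abs_neg, abs_of_pos hinv_pos]
  have ecol : ∀ k ∈ I, (Xq N k 0 + Jq N k 0)^m ≤ (1/(12*(N:ℝ)))^m := by
    intro k hk
    obtain ⟨h1, h2⟩ := hmemI k hk
    rw [Xq_off hN (show k < N by omega) (show 0 < N by omega) (by omega),
      Jq_comm k 0, Jq_zero_left hN (hI ▸ hk)]
    calc (-(1/(12*(N:ℝ))) + 0)^m ≤ |(-(1/(12*(N:ℝ))) + 0)|^m := pow_le_abs_pow _ m
      _ = (1/(12*(N:ℝ)))^m := by rw [add_zero, abs_neg, abs_of_pos hinv_pos]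
  -- diagonal
  have ediagJ : ∀ k ∈ I, (0:ℝ) ≤ (Jq N k k)^m := by
    intro k hk
    rw [Jq_diag hN (hI ▸ hk)]
    have : (0:ℝ) ≤ ((N:ℝ)-2)/(12*(N:ℝ)) := div_nonneg (by linarith) (by positivity)
    positivity
  have ediag : ∀ k ∈ I, (Xq N k k + Jq N k k)^m ≤ (1/6:ℝ)^m := by
    intro k hk
    rw [Xq_diag hN2, Jq_diag hN (hI ▸ hk)]
    have hnn : (0:ℝ) ≤ ((N:ℝ)-2)/(12*(N:ℝ)) := div_nonneg (by linarith) (by positivity)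
    have hle : ((N:ℝ)-2)/(12*(N:ℝ)) ≤ 1/12 := by
      rw [div_le_div_iff₀ (by positivity) (by norm_num)]
      linarith
    exact pow_le_pow_left₀ (by linarith) (by linarith) m
  -- off diagonal
  have eoff : ∀ k ∈ I, ∀ k' ∈ I, k ≠ k' →
      (Xq N k k' + Jq N k k')^m - (Jq N k k')^m
        ≤ (m:ℝ) * (1/4:ℝ)^(m-1) * (1/(12*(N:ℝ))) := by
    intro k hk k' hk' hne
    obtain ⟨ha1, ha2⟩ := hmemI k hk
    obtain ⟨hb1, hb2⟩ := hmemI k' hk'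
    have hX := Xq_off hN (show k < N by omega) (show k' < N by omega) hne
    have hJt := abs_Jq_tight hN (hI ▸ hk) (hI ▸ hk')
    have hy1 : 1/(N:ℝ) ≤ 1/2 := by
      rw [div_le_div_iff₀ hN0 (by norm_num)]; linarith
    have hy0 : (0:ℝ) < 1/(N:ℝ) := by positivity
    have h12 : 1/(12*(N:ℝ)) = (1/(N:ℝ))/12 := by ring
    have hsq : (1/2 - 1/(N:ℝ))^2 + 1/(12*(N:ℝ)) ≤ 1/4 := by
      rw [h12]; nlinarith
    have hsq2 : (1/2 - 1/(N:ℝ))^2 ≤ 1/4 := by nlinarith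
    have hXPJ : |Xq N k k' + Jq N k k'| ≤ 1/4 := by
      calc |Xq N k k' + Jq N k k'| ≤ |Xq N k k'| + |Jq N k k'| := abs_add_le _ _
        _ ≤ 1/(12*(N:ℝ)) + (1/2 - 1/(N:ℝ))^2 := by
            rw [hX, abs_neg, abs_of_pos hinv_pos]; linarith
        _ ≤ 1/4 := by linarith
    have hJ4 : |Jq N k k'| ≤ 1/4 := hJt.trans hsq2
    have habs := abs_pow_sub_pow (a := Xq N k k' + Jq N k k') (b := Jq N k k') m hXPJ hJ4
    have hdiff : |(Xq N k k' + Jq N k k') - Jq N k k'| = 1/(12*(N:ℝ)) := by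
      rw [show (Xq N k k' + Jq N k k') - Jq N k k' = Xq N k k' by ring, hX, abs_neg,
        abs_of_pos hinv_pos]
    calc (Xq N k k' + Jq N k k')^m - (Jq N k k')^m
        ≤ |(Xq N k k' + Jq N k k')^m - (Jq N k k')^m| := le_abs_self _
      _ ≤ (m:ℝ) * (1/4:ℝ)^(m-1) * |(Xq N k k' + Jq N k k') - Jq N k k'| := habs
      _ = (m:ℝ) * (1/4:ℝ)^(m-1) * (1/(12*(N:ℝ))) := by rw [hdiff]
  -- split the big sum
  have hsplit : Finset.range N = insert 0 I := by
    rw [hI]; ext x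
    simp only [Finset.mem_range, Finset.mem_insert, Finset.mem_Icc]
    omega
  have h0I : 0 ∉ I := by rw [hI]; simp
  have hcardI : ((I.card : ℕ) : ℝ) = (N:ℝ) - 1 := by rw [hI, card_I, cast_pred hN2]
  set offb : ℝ := (m:ℝ) * (1/4:ℝ)^(m-1) * (1/(12*(N:ℝ))) with hoffb
  have hoffb0 : 0 ≤ offb := by positivity
  have hR0 : ∑ k' ∈ I, (Xq N 0 k' + Jq N 0 k')^m ≤ ((N:ℝ)-1) * (1/(12*(N:ℝ)))^m := by
    calc ∑ k' ∈ I, (Xq N 0 k' + Jq N 0 k')^m ≤ I.card • ((1/(12*(N:ℝ)))^m) :=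
          Finset.sum_le_card_nsmul _ _ _ erow
      _ = ((N:ℝ)-1) * (1/(12*(N:ℝ)))^m := by rw [nsmul_eq_mul, hcardI]
  have hC0 : ∑ k ∈ I, (Xq N k 0 + Jq N k 0)^m ≤ ((N:ℝ)-1) * (1/(12*(N:ℝ)))^m := by
    calc ∑ k ∈ I, (Xq N k 0 + Jq N k 0)^m ≤ I.card • ((1/(12*(N:ℝ)))^m) :=
          Finset.sum_le_card_nsmul _ _ _ ecol
      _ = ((N:ℝ)-1) * (1/(12*(N:ℝ)))^m := by rw [nsmul_eq_mul, hcardI]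
  have hk_bound : ∀ k ∈ I, ∑ k' ∈ I, (Xq N k k' + Jq N k k')^m
      ≤ (∑ k' ∈ I, (Jq N k k')^m) + ((1/6:ℝ)^m + ((N:ℝ)-1) * offb) := by
    intro k hk
    rw [← Finset.sum_erase_add I (fun k' => (Xq N k k' + Jq N k k')^m) hk,
      ← Finset.sum_erase_add I (fun k' => (Jq N k k')^m) hk]
    have h2 : ∑ k' ∈ I.erase k, ((Xq N k k' + Jq N k k')^m - (Jq N k k')^m)
        ≤ ((I.erase k).card : ℝ) * offb := by
      calc ∑ k' ∈ I.erase k, ((Xq N k k' + Jq N k k')^m - (Jq N k k')^m)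
          ≤ (I.erase k).card • offb := by
            apply Finset.sum_le_card_nsmul
            intro k' hk'
            rw [Finset.mem_erase] at hk'
            exact eoff k hk k' hk'.2 (Ne.symm hk'.1)
        _ = ((I.erase k).card : ℝ) * offb := nsmul_eq_mul _ _
    have hce : ((I.erase k).card : ℝ) ≤ (N:ℝ) - 1 := by
      have h3 : (I.erase k).card ≤ I.card := Finset.card_le_card (Finset.erase_subset _ _)
      calc ((I.erase k).card : ℝ) ≤ (I.card : ℝ) := by exact_mod_cast h3
        _ = (N:ℝ) - 1 := hcardI
    have h4 : ∑ k' ∈ I.erase k, ((Xq N k k' + Jq N k k')^m - (Jq N k k')^m)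
        = (∑ k' ∈ I.erase k, (Xq N k k' + Jq N k k')^m)
          - ∑ k' ∈ I.erase k, (Jq N k k')^m := Finset.sum_sub_distrib _ _
    have h5 := ediag k hk
    have h6 := ediagJ k hk
    have h7 : ((I.erase k).card : ℝ) * offb ≤ ((N:ℝ)-1) * offb :=
      mul_le_mul_of_nonneg_right hce hoffb0
    linarith [h2, h4.symm.le, h4.le]
  have hD : ∑ k ∈ I, ∑ k' ∈ I, (Xq N k k' + Jq N k k')^m
      ≤ (∑ k ∈ I, ∑ k' ∈ I, (Jq N k k')^m)
        + ((N:ℝ)-1) * ((1/6:ℝ)^m + ((N:ℝ)-1) * offb) := by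
    calc ∑ k ∈ I, ∑ k' ∈ I, (Xq N k k' + Jq N k k')^m
        ≤ ∑ k ∈ I, ((∑ k' ∈ I, (Jq N k k')^m) + ((1/6:ℝ)^m + ((N:ℝ)-1) * offb)) :=
          Finset.sum_le_sum hk_bound
      _ = (∑ k ∈ I, ∑ k' ∈ I, (Jq N k k')^m)
          + ((N:ℝ)-1) * ((1/6:ℝ)^m + ((N:ℝ)-1) * offb) := by
          rw [Finset.sum_add_distrib, Finset.sum_const, nsmul_eq_mul, hcardI]
  have key : (∑ k ∈ Finset.range N, ∑ k' ∈ Finset.range N, (Xq N k k' + Jq N k k')^m)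
      ≤ (2/(3:ℝ)^m + 1/(4:ℝ)^m) * N + ∑ k ∈ I, ∑ k' ∈ I, (Jq N k k')^m := by
    rw [hsplit]
    simp only [Finset.sum_insert h0I]
    rw [Finset.sum_add_distrib]
    have harith := final_arith (N:ℝ) hNR m hm
    rw [← hoffb] at harith
    have hDist : ((N:ℝ)-1) * ((1/6:ℝ)^m + ((N:ℝ)-1)*offb)
        = ((N:ℝ)-1)*(1/6:ℝ)^m + ((N:ℝ)-1)*(((N:ℝ)-1)*offb) := by ring
    linarith [e0, hR0, hC0, hD, harith]
  -- conclude
  have hfin : (1/(N:ℝ)^2) *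
      (∑ k ∈ Finset.range N, ∑ k' ∈ Finset.range N, (Xq N k k' + Jq N k k')^m)
      ≤ (1/(N:ℝ)^2) * ((2/(3:ℝ)^m + 1/(4:ℝ)^m) * N + ∑ k ∈ I, ∑ k' ∈ I, (Jq N k k')^m) :=
    mul_le_mul_of_nonneg_left key (by positivity)
  calc (1/(N:ℝ)^2) *
      (∑ k ∈ Finset.range N, ∑ k' ∈ Finset.range N, (Xq N k k' + Jq N k k')^m)
      ≤ (1/(N:ℝ)^2) * ((2/(3:ℝ)^m + 1/(4:ℝ)^m) * N + ∑ k ∈ I, ∑ k' ∈ I, (Jq N k k')^m) := hfin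
    _ = (2/(3:ℝ)^m + 1/(4:ℝ)^m) / N + (1/(N:ℝ)^2) * ∑ k ∈ I, ∑ k' ∈ I, (Jq N k k')^m := by
        field_simp
end

section
/- Let N ≥ 3 be a prime number and κ ∈ {1,…,N-1}. Define T_N(κ) := ∑_{q=1}^{(N-1)/2} 1/(q · |r(qκ, N)|), where r(j, N) denotes the unique integer congruent to j modulo N with |r(j,N)| ≤ (N-1)/2. Then T_N(κ) < π²/6. -/
open Real

/-- `T_N(κ) = ∑_{q=1}^{(N-1)/2} 1/(q·|r(qκ, N)|)`, where `r` is a function selecting the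
representative of smallest magnitude modulo `N`. -/
noncomputable def TN (N : ℕ) (r : ℤ → ℤ) (κ : ℕ) : ℝ :=
  ∑ q ∈ Finset.Icc 1 ((N - 1) / 2), 1 / ((q : ℝ) * |((r ((q : ℤ) * κ) : ℤ) : ℝ)|)

lemma sum_inv_sq_le (s : Finset ℕ) : ∑ n ∈ s, (1:ℝ)/(n:ℝ)^2 ≤ π ^ 2 / 6 :=
  sum_le_hasSum s (fun i _ => by positivity) hasSum_zeta_two

lemma sum_inv_sq_lt (s : Finset ℕ) : ∑ n ∈ s, (1:ℝ)/(n:ℝ)^2 < π ^ 2 / 6 := by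
  obtain ⟨m, hm1, hms⟩ : ∃ m : ℕ, 1 ≤ m ∧ m ∉ s := by
    refine ⟨s.sup id + 1, le_add_self, fun h => ?_⟩
    have := Finset.le_sup (f := id) h
    simp only [id] at this
    omega
  calc ∑ n ∈ s, (1:ℝ)/(n:ℝ)^2 < ∑ n ∈ insert m s, (1:ℝ)/(n:ℝ)^2 := by
        rw [Finset.sum_insert hms]
        have hm : (0:ℝ) < (m:ℝ) := by exact_mod_cast hm1
        have : (0:ℝ) < 1/(m:ℝ)^2 := by positivity
        linarith
    _ ≤ π ^ 2 / 6 := sum_inv_sq_le _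

/-- For `N ≥ 3` prime and `κ ∈ {1,…,N-1}`, `T_N(κ) < π²/6`. -/
theorem TN_lt (N : ℕ) (hN : N.Prime) (hN3 : 3 ≤ N)
    (κ : ℕ) (hκ : κ ∈ Finset.Icc 1 (N - 1))
    (r : ℤ → ℤ) (hr : ∀ j : ℤ, r j ≡ j [ZMOD (N : ℤ)] ∧ |r j| ≤ ((N : ℤ) - 1) / 2) :
    TN N r κ < π ^ 2 / 6 := by
  obtain ⟨hκ1, hκ2⟩ := Finset.mem_Icc.mp hκ
  set M := (N - 1) / 2 with hM
  have hMN : 2 * M ≤ N - 1 := by omega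
  have hPrimeInt : Prime (N : ℤ) := Nat.prime_iff_prime_int.mp hN
  have hNdvdκ : ¬ (N : ℤ) ∣ (κ : ℤ) := by
    intro h
    have : (N : ℤ) ≤ κ := Int.le_of_dvd (by exact_mod_cast hκ1) h
    have : N ≤ κ := by exact_mod_cast this
    omega
  set f : ℕ → ℕ := fun q => (r ((q : ℤ) * κ)).natAbs with hf
  -- f q ≥ 1
  have hne : ∀ q : ℕ, q ∈ Finset.Icc 1 M → 1 ≤ f q := by
    intro q hq
    obtain ⟨hq1, hq2⟩ := Finset.mem_Icc.mp hq
    rw [Nat.one_le_iff_ne_zero, Int.natAbs_ne_zero]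
    intro h0
    have hcong := (hr ((q : ℤ) * κ)).1
    have hdvd : (N : ℤ) ∣ (q : ℤ) * κ := by
      have := hcong.dvd
      rwa [h0, sub_zero] at this
    rcases hPrimeInt.dvd_mul.mp hdvd with h | h
    · have : (N : ℤ) ≤ q := Int.le_of_dvd (by exact_mod_cast hq1) h
      have : N ≤ q := by exact_mod_cast this
      omega
    · exact hNdvdκ h
  -- injectivity of f on the range
  have hinj : ∀ q ∈ Finset.Icc 1 M, ∀ q' ∈ Finset.Icc 1 M, f q = f q' → q = q' := by
    intro q hq q' hq' habs
    obtain ⟨hq1, hq2⟩ := Finset.mem_Icc.mp hq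
    obtain ⟨hq'1, hq'2⟩ := Finset.mem_Icc.mp hq'
    have hcq := (hr ((q : ℤ) * κ)).1
    have hcq' := (hr ((q' : ℤ) * κ)).1
    have hqM : (q : ℤ) ≤ M := by exact_mod_cast hq2
    have hq'M : (q' : ℤ) ≤ M := by exact_mod_cast hq'2
    have hq1' : (1 : ℤ) ≤ q := by exact_mod_cast hq1
    have hq'1' : (1 : ℤ) ≤ q' := by exact_mod_cast hq'1
    have hMN' : 2 * (M : ℤ) ≤ (N : ℤ) - 1 := by omega
    have h3 : (3 : ℤ) ≤ N := by exact_mod_cast hN3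
    rcases Int.natAbs_eq_natAbs_iff.mp habs with heq | heq
    · -- same sign: q κ ≡ q' κ
      have hcq'' : r ((q : ℤ) * κ) ≡ (q' : ℤ) * κ [ZMOD (N : ℤ)] := heq ▸ hcq'
      have hmod : (q : ℤ) * κ ≡ (q' : ℤ) * κ [ZMOD (N : ℤ)] := hcq.symm.trans hcq''
      have hdvd : (N : ℤ) ∣ ((q' : ℤ) - q) * κ := by
        have := hmod.dvd
        rwa [← sub_mul] at this
      rcases hPrimeInt.dvd_mul.mp hdvd with h | h
      · have h0 : (q' : ℤ) - q = 0 :=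
          Int.eq_zero_of_abs_lt_dvd h (by rw [abs_sub_lt_iff]; omega)
        have : (q : ℤ) = q' := by omega
        exact_mod_cast this
      · exact absurd h hNdvdκ
    · -- opposite sign: q κ ≡ -(q' κ)
      exfalso
      have hcq'' : r ((q : ℤ) * κ) ≡ -((q' : ℤ) * κ) [ZMOD (N : ℤ)] := heq ▸ hcq'.neg
      have hmod : (q : ℤ) * κ ≡ -((q' : ℤ) * κ) [ZMOD (N : ℤ)] := hcq.symm.trans hcq''
      have hdvd : (N : ℤ) ∣ ((q : ℤ) + q') * κ := by
        have h2 := hmod.symm.dvd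
        have h3' : (q : ℤ) * κ - -((q' : ℤ) * κ) = ((q : ℤ) + q') * κ := by ring
        rwa [h3'] at h2
      rcases hPrimeInt.dvd_mul.mp hdvd with h | h
      · have : (N : ℤ) ≤ (q : ℤ) + q' := Int.le_of_dvd (by omega) h
        omega
      · exact hNdvdκ h
  -- now estimate the sum
  have hbound : TN N r κ ≤ ∑ q ∈ Finset.Icc 1 M,
      ((1:ℝ)/(q:ℝ)^2 / 2 + (1:ℝ)/((f q : ℕ):ℝ)^2 / 2) := by
    rw [TN]
    apply Finset.sum_le_sum
    intro q hq
    obtain ⟨hq1, _⟩ := Finset.mem_Icc.mp hq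
    have hqpos : (0:ℝ) < (q:ℝ) := by exact_mod_cast hq1
    have hfpos : (0:ℝ) < ((f q : ℕ):ℝ) := by exact_mod_cast hne q hq
    have habs : |((r ((q : ℤ) * κ) : ℤ) : ℝ)| = ((f q : ℕ) : ℝ) := by
      simp only [hf]
      rw [Nat.cast_natAbs, Int.cast_abs]
    rw [habs]
    have key := two_mul_le_add_sq ((q:ℝ)⁻¹) (((f q : ℕ):ℝ)⁻¹)
    calc (1:ℝ) / ((q:ℝ) * ((f q : ℕ):ℝ)) = (q:ℝ)⁻¹ * ((f q : ℕ):ℝ)⁻¹ := by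
          rw [one_div, mul_inv]
      _ ≤ ((q:ℝ)⁻¹^2 + ((f q : ℕ):ℝ)⁻¹^2)/2 := by linarith
      _ = (1:ℝ)/(q:ℝ)^2 / 2 + (1:ℝ)/((f q : ℕ):ℝ)^2 / 2 := by
          simp only [inv_pow, one_div]; ring
  have hsplit : ∑ q ∈ Finset.Icc 1 M, ((1:ℝ)/(q:ℝ)^2 / 2 + (1:ℝ)/((f q : ℕ):ℝ)^2 / 2)
      = (∑ q ∈ Finset.Icc 1 M, (1:ℝ)/(q:ℝ)^2) / 2
        + (∑ q ∈ Finset.Icc 1 M, (1:ℝ)/((f q : ℕ):ℝ)^2) / 2 := by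
    rw [Finset.sum_add_distrib, Finset.sum_div, Finset.sum_div]
  have h1 : ∑ q ∈ Finset.Icc 1 M, (1:ℝ)/(q:ℝ)^2 < π ^ 2 / 6 := sum_inv_sq_lt _
  have h2 : ∑ q ∈ Finset.Icc 1 M, (1:ℝ)/((f q : ℕ):ℝ)^2 < π ^ 2 / 6 := by
    have himg : ∑ n ∈ (Finset.Icc 1 M).image f, (1:ℝ)/(n:ℝ)^2
        = ∑ q ∈ Finset.Icc 1 M, (1:ℝ)/((f q : ℕ):ℝ)^2 := Finset.sum_image hinj
    rw [← himg]
    exact sum_inv_sq_lt _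
  calc TN N r κ ≤ _ := hbound
    _ = _ := hsplit
    _ < π ^ 2 / 6 := by linarith
end

section
/- Let N ≥ 3 be a prime number and κ ∈ {1,…,N-1}. Define J_{N;κ,1} := (1/(N-1)) ∑_{z=1}^{N-1} ({κz/N} - 1/2)({z/N} - 1/2) and T_N(κ) := ∑_{q=1}^{(N-1)/2} 1/(q · |r(qκ, N)|), where r(j, N) denotes the unique integer congruent to j modulo N with |r(j,N)| ≤ (N-1)/2. Then |J_{N;κ,1}| ≤ (1/(2π²)) · (N/(N-1)) · (T_N(κ) + 10π² ln N/(9N)). -/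
open Finset Real Filter

/-- Sum of cosines of a full (punctured) period. -/
lemma aux_sum_cos_eq (N : ℕ) (hN : 3 ≤ N) (c : ℤ) :
    ∑ z ∈ Finset.Icc 1 (N - 1), Real.cos (2 * π * (c : ℝ) * (z : ℝ) / (N : ℝ))
      = if (N : ℤ) ∣ c then (N : ℝ) - 1 else -1 := by
  have hN0 : (N : ℝ) ≠ 0 := by positivity
  have hrange : ∑ z ∈ Finset.range N, Real.cos (2 * π * (c : ℝ) * (z : ℝ) / (N : ℝ))
      = if (N : ℤ) ∣ c then (N : ℝ) else 0 := by
    split_ifs with h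
    · obtain ⟨d, rfl⟩ := h
      have key : ∀ z ∈ Finset.range N,
          Real.cos (2 * π * (((N : ℤ) * d : ℤ) : ℝ) * (z : ℝ) / (N : ℝ)) = 1 := by
        intro z _
        have harg : (2 * π * (((N : ℤ) * d : ℤ) : ℝ) * (z : ℝ) / (N : ℝ))
            = ((d * z : ℤ) : ℝ) * (2 * π) := by
          push_cast
          field_simp
        rw [harg, Real.cos_int_mul_two_pi]
      rw [Finset.sum_congr rfl key]
      simp
    · set ζ : ℂ := Complex.exp ((2 * π * (c : ℝ) / (N : ℝ) : ℝ) * Complex.I) with hζdef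
      have hζ1 : ζ ≠ 1 := by
        rw [hζdef, Ne, Complex.exp_eq_one_iff]
        rintro ⟨n, hn⟩
        rw [show ((n:ℂ)) * (2*π*Complex.I) = (((n:ℝ)*(2*π) : ℝ) : ℂ) * Complex.I by
          push_cast; ring] at hn
        have hx : (2*π*(c:ℝ)/(N:ℝ)) = (n:ℝ)*(2*π) := by
          have := mul_right_cancel₀ Complex.I_ne_zero hn
          exact_mod_cast this
        have hπ : (0:ℝ) < π := Real.pi_pos
        have hc : (c : ℝ) = (n : ℝ) * N := by
          rw [div_eq_iff hN0] at hx
          nlinarith [hx]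
        have hcz : c = n * N := by exact_mod_cast hc
        exact h ⟨n, by rw [hcz]; ring⟩
      have hζN : ζ ^ N = 1 := by
        rw [hζdef, ← Complex.exp_nat_mul]
        have harg : (N : ℂ) * (((2 * π * (c : ℝ) / (N : ℝ) : ℝ) : ℂ) * Complex.I)
            = (c : ℂ) * (2 * π * Complex.I) := by
          push_cast
          have : (N : ℂ) ≠ 0 := by exact_mod_cast hN0
          field_simp
        rw [harg, Complex.exp_int_mul_two_pi_mul_I]
      have hsum : ∑ z ∈ Finset.range N, ζ ^ z = 0 := by
        rw [geom_sum_eq hζ1, hζN]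
        simp
      have hre : ∀ z ∈ Finset.range N,
          Real.cos (2 * π * (c : ℝ) * (z : ℝ) / (N : ℝ)) = (ζ ^ z).re := by
        intro z _
        rw [hζdef, ← Complex.exp_nat_mul]
        have harg : (z : ℂ) * (((2 * π * (c : ℝ) / (N : ℝ) : ℝ) : ℂ) * Complex.I)
            = ((2 * π * (c : ℝ) * (z : ℝ) / (N : ℝ) : ℝ) : ℂ) * Complex.I := by
          push_cast
          ring
        rw [harg, Complex.exp_ofReal_mul_I_re]
      calc ∑ z ∈ Finset.range N, Real.cos (2 * π * (c : ℝ) * (z : ℝ) / (N : ℝ))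
          = ∑ z ∈ Finset.range N, (ζ ^ z).re := Finset.sum_congr rfl hre
        _ = (∑ z ∈ Finset.range N, ζ ^ z).re := by rw [Complex.re_sum]
        _ = 0 := by rw [hsum]; simp
  have hIcoIcc : Finset.Ico 1 N = Finset.Icc 1 (N - 1) := by
    ext x
    simp only [Finset.mem_Ico, Finset.mem_Icc]
    omega
  have hsplit : ∑ z ∈ Finset.range N, Real.cos (2 * π * (c : ℝ) * (z : ℝ) / (N : ℝ))
      = Real.cos (2 * π * (c : ℝ) * ((0:ℕ) : ℝ) / (N : ℝ))
        + ∑ z ∈ Finset.Icc 1 (N - 1), Real.cos (2 * π * (c : ℝ) * (z : ℝ) / (N : ℝ)) := by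
    rw [Finset.range_eq_Ico, Finset.sum_eq_sum_Ico_succ_bot (by omega : 0 < N), hIcoIcc]
  have hzero : Real.cos (2 * π * (c : ℝ) * ((0:ℕ) : ℝ) / (N : ℝ)) = 1 := by
    norm_num
  rw [hrange, hzero] at hsplit
  split_ifs at hsplit ⊢ with h
  · linarith
  · linarith

/-- Telescoping Dirichlet-kernel identity. -/
lemma aux_tele (θ : ℝ) (m : ℕ) :
    2 * Real.sin θ * ∑ k ∈ Finset.Icc 1 m, Real.cos (2 * (k : ℝ) * θ)
      = Real.sin ((2 * (m : ℝ) + 1) * θ) - Real.sin θ := by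
  induction m with
  | zero => simp
  | succ n ih =>
    rw [Finset.sum_Icc_succ_top (by omega : 1 ≤ n + 1), mul_add, ih]
    have e1 : (2 * ((n + 1 : ℕ) : ℝ) + 1) * θ = (2 * (n : ℝ) + 2) * θ + θ := by
      push_cast; ring
    have e2 : (2 * (n : ℝ) + 1) * θ = (2 * (n : ℝ) + 2) * θ - θ := by ring
    have e3 : 2 * ((n + 1 : ℕ) : ℝ) * θ = (2 * (n : ℝ) + 2) * θ := by push_cast; ring
    rw [e1, e2, e3, Real.sin_add, Real.sin_sub]
    ring

/-- Row expansion: cot θ · sin(2wθ) = 1 + 2∑cos(2kθ) + cos(2wθ). -/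
lemma aux_key_row (θ : ℝ) (hs : Real.sin θ ≠ 0) (w : ℕ) (hw : 1 ≤ w) :
    Real.cos θ / Real.sin θ * Real.sin (2 * (w : ℝ) * θ)
      = 1 + 2 * (∑ k ∈ Finset.Icc 1 (w - 1), Real.cos (2 * (k : ℝ) * θ))
        + Real.cos (2 * (w : ℝ) * θ) := by
  rw [div_mul_eq_mul_div, div_eq_iff hs]
  have h1 := aux_tele θ (w - 1)
  have hcast : ((w - 1 : ℕ) : ℝ) = (w : ℝ) - 1 := by
    push_cast [hw]; ring
  rw [hcast] at h1
  have e1 : (2 * ((w : ℝ) - 1) + 1) * θ = 2 * (w : ℝ) * θ - θ := by ring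
  rw [e1, Real.sin_sub] at h1
  have hexp : (1 + 2 * (∑ k ∈ Finset.Icc 1 (w - 1), Real.cos (2 * (k : ℝ) * θ))
        + Real.cos (2 * (w : ℝ) * θ)) * Real.sin θ
      = Real.sin θ + (2 * Real.sin θ * ∑ k ∈ Finset.Icc 1 (w - 1), Real.cos (2 * (k : ℝ) * θ))
        + Real.cos (2 * (w : ℝ) * θ) * Real.sin θ := by ring
  rw [hexp, h1]
  ring


/-- Finite Fourier expansion of the sawtooth at rational points. -/
lemma aux_claimA (N : ℕ) (hN : 3 ≤ N) (j : ℕ) (hj : ¬ N ∣ j) :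
    Int.fract ((j : ℝ) / (N : ℝ)) - 1 / 2
      = -(1 / (2 * (N : ℝ))) * ∑ n ∈ Finset.Icc 1 (N - 1),
          Real.cos (π * (n : ℝ) / (N : ℝ)) / Real.sin (π * (n : ℝ) / (N : ℝ))
            * Real.sin (2 * π * (n : ℝ) * (j : ℝ) / (N : ℝ)) := by
  have hN0 : (N : ℝ) ≠ 0 := by positivity
  have hNpos : (0 : ℝ) < N := by positivity
  set w := j % N with hwdef
  have hw1 : 1 ≤ w := by
    rcases Nat.eq_zero_or_pos w with h | h
    · exact absurd (Nat.dvd_of_mod_eq_zero h) hj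
    · exact h
  have hwN : w < N := Nat.mod_lt j (by omega)
  set t := j / N with htdef
  have hjt : j = N * t + w := (Nat.div_add_mod j N).symm
  -- fractional part
  have hfract : Int.fract ((j : ℝ) / (N : ℝ)) = (w : ℝ) / N := by
    have hj' : (j : ℝ) = (N : ℝ) * t + w := by exact_mod_cast congrArg (Nat.cast : ℕ → ℝ) hjt
    have harg : (j : ℝ) / (N : ℝ) = ((t : ℤ) : ℝ) + (w : ℝ) / N := by
      rw [hj', add_div]
      congr 1
      · rw [mul_comm, mul_div_assoc, div_self hN0, mul_one]
        push_cast
        ring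
    rw [harg, Int.fract_intCast_add, Int.fract_eq_self.2
      ⟨by positivity, by rw [div_lt_one hNpos]; exact_mod_cast hwN⟩]
  -- sine periodicity
  have hsin : ∀ n : ℕ, Real.sin (2 * π * (n : ℝ) * (j : ℝ) / (N : ℝ))
      = Real.sin (2 * π * (n : ℝ) * (w : ℝ) / (N : ℝ)) := by
    intro n
    have hj' : (j : ℝ) = (N : ℝ) * t + w := by exact_mod_cast congrArg (Nat.cast : ℕ → ℝ) hjt
    have harg : 2 * π * (n : ℝ) * (j : ℝ) / (N : ℝ)
        = 2 * π * (n : ℝ) * (w : ℝ) / N + ((n * t : ℕ) : ℝ) * (2 * π) := by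
      rw [hj']
      push_cast
      field_simp
      ring
    rw [harg, Real.sin_add_nat_mul_two_pi]
  -- per-row expansion
  have hrow : ∀ n ∈ Finset.Icc 1 (N - 1),
      Real.cos (π * (n : ℝ) / (N : ℝ)) / Real.sin (π * (n : ℝ) / (N : ℝ))
          * Real.sin (2 * π * (n : ℝ) * (j : ℝ) / (N : ℝ))
        = 1 + 2 * (∑ k ∈ Finset.Icc 1 (w - 1), Real.cos (2 * π * (k : ℝ) * (n : ℝ) / N))
          + Real.cos (2 * π * (w : ℝ) * (n : ℝ) / N) := by
    intro n hn
    simp only [Finset.mem_Icc] at hn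
    have hn1 : (0 : ℝ) < n := by exact_mod_cast (by omega : 0 < n)
    have hnN : (n : ℝ) < N := by exact_mod_cast (by omega : n < N)
    have hθpos : 0 < π * n / N := by positivity
    have hθlt : π * n / N < π := by
      rw [div_lt_iff₀ hNpos]
      nlinarith [Real.pi_pos]
    have hs := ne_of_gt (Real.sin_pos_of_pos_of_lt_pi hθpos hθlt)
    rw [hsin n]
    have h2 : 2 * π * (n : ℝ) * (w : ℝ) / N = 2 * (w : ℝ) * (π * n / N) := by ring
    rw [h2, aux_key_row _ hs w hw1]
    have e1 : ∑ k ∈ Finset.Icc 1 (w - 1), Real.cos (2 * (k : ℝ) * (π * n / N))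
        = ∑ k ∈ Finset.Icc 1 (w - 1), Real.cos (2 * π * (k : ℝ) * (n : ℝ) / N) :=
      Finset.sum_congr rfl (fun k _ => by congr 1; ring)
    have e2 : Real.cos (2 * (w : ℝ) * (π * n / N)) = Real.cos (2 * π * (w : ℝ) * (n : ℝ) / N) := by
      congr 1; ring
    rw [e1, e2]
  rw [Finset.sum_congr rfl hrow]
  have hsplit : ∑ n ∈ Finset.Icc 1 (N - 1),
      (1 + 2 * (∑ k ∈ Finset.Icc 1 (w - 1), Real.cos (2 * π * (k : ℝ) * (n : ℝ) / N))
        + Real.cos (2 * π * (w : ℝ) * (n : ℝ) / N))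
      = (((N - 1 : ℕ)) : ℝ)
        + 2 * (∑ n ∈ Finset.Icc 1 (N - 1), ∑ k ∈ Finset.Icc 1 (w - 1),
            Real.cos (2 * π * (k : ℝ) * (n : ℝ) / N))
        + ∑ n ∈ Finset.Icc 1 (N - 1), Real.cos (2 * π * (w : ℝ) * (n : ℝ) / N) := by
    rw [Finset.sum_add_distrib, Finset.sum_add_distrib, Finset.sum_const, ← Finset.mul_sum,
      Nat.card_Icc]
    simp [nsmul_eq_mul]
  rw [hsplit]
  have hswap : ∑ n ∈ Finset.Icc 1 (N - 1), ∑ k ∈ Finset.Icc 1 (w - 1),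
      Real.cos (2 * π * (k : ℝ) * (n : ℝ) / N)
      = ∑ k ∈ Finset.Icc 1 (w - 1), ∑ n ∈ Finset.Icc 1 (N - 1),
        Real.cos (2 * π * (k : ℝ) * (n : ℝ) / N) := Finset.sum_comm
  have hinner : ∀ k ∈ Finset.Icc 1 (w - 1),
      ∑ n ∈ Finset.Icc 1 (N - 1), Real.cos (2 * π * (k : ℝ) * (n : ℝ) / N) = -1 := by
    intro k hk
    simp only [Finset.mem_Icc] at hk
    have h := aux_sum_cos_eq N hN (k : ℤ)
    rw [if_neg] at h
    · rw [← h]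
      exact Finset.sum_congr rfl (fun n _ => by push_cast; ring_nf)
    · rw [Int.natCast_dvd_natCast]
      intro hdvd
      have := Nat.le_of_dvd (by omega) hdvd
      omega
  have hlast : ∑ n ∈ Finset.Icc 1 (N - 1), Real.cos (2 * π * (w : ℝ) * (n : ℝ) / N) = -1 := by
    have h := aux_sum_cos_eq N hN (w : ℤ)
    rw [if_neg] at h
    · rw [← h]
      exact Finset.sum_congr rfl (fun n _ => by push_cast; ring_nf)
    · rw [Int.natCast_dvd_natCast]
      intro hdvd
      have := Nat.le_of_dvd (by omega) hdvd
      omega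
  rw [hswap, Finset.sum_congr rfl hinner, Finset.sum_const, hlast, hfract]
  rw [Nat.card_Icc]
  have hc1 : ((N - 1 : ℕ) : ℝ) = (N : ℝ) - 1 := by
    push_cast [show (1:ℕ) ≤ N by omega]; ring
  have hc2 : ((w - 1 + 1 - 1 : ℕ) : ℝ) = (w : ℝ) - 1 := by
    rw [show w - 1 + 1 - 1 = w - 1 by omega, Nat.cast_sub hw1, Nat.cast_one]
  rw [nsmul_eq_mul, hc1, hc2]
  field_simp
  ring

/-- Cotangent bound. -/
lemma aux_cot_bound (N : ℕ) (hN : 3 ≤ N) (m t : ℕ) (ht1 : 1 ≤ t) (ht2 : 2 * t ≤ N - 1)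
    (hm : m = t ∨ m = N - t) :
    |Real.cos (π * (m : ℝ) / (N : ℝ)) / Real.sin (π * (m : ℝ) / (N : ℝ))|
      ≤ (N : ℝ) / (π * t) := by
  have hNpos : (0 : ℝ) < N := by positivity
  have hN0 : (N : ℝ) ≠ 0 := by positivity
  have hπ := Real.pi_pos
  have ht1' : (1 : ℝ) ≤ t := by exact_mod_cast ht1
  have htpos : (0 : ℝ) < t := by linarith
  have ht2' : 2 * (t : ℝ) ≤ (N : ℝ) - 1 := by
    have : ((2 * t : ℕ) : ℝ) ≤ ((N - 1 : ℕ) : ℝ) := by exact_mod_cast ht2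
    push_cast [show (1:ℕ) ≤ N by omega] at this
    linarith
  set x := π * (t : ℝ) / N with hx
  have hxpos : 0 < x := by positivity
  have hxlt : x < π / 2 := by
    rw [hx, div_lt_div_iff₀ hNpos (by norm_num : (0:ℝ) < 2)]
    nlinarith
  have hsin : 0 < Real.sin x := Real.sin_pos_of_pos_of_lt_pi hxpos (by linarith)
  have hcos : 0 < Real.cos x := Real.cos_pos_of_mem_Ioo ⟨by linarith, hxlt⟩
  have htan : x < Real.tan x := Real.lt_tan hxpos hxlt
  have hcot : Real.cos x / Real.sin x ≤ 1 / x := by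
    rw [div_le_div_iff₀ hsin hxpos]
    have := Real.tan_eq_sin_div_cos x
    rw [this] at htan
    rw [lt_div_iff₀ hcos] at htan
    linarith
  have hcotpos : 0 ≤ Real.cos x / Real.sin x := le_of_lt (div_pos hcos hsin)
  have hbound : |Real.cos x / Real.sin x| ≤ (N : ℝ) / (π * t) := by
    rw [abs_of_nonneg hcotpos]
    calc Real.cos x / Real.sin x ≤ 1 / x := hcot
      _ = (N : ℝ) / (π * t) := by rw [hx]; field_simp
  rcases hm with rfl | rfl
  · exact hbound
  · have hmr : π * ((N - t : ℕ) : ℝ) / N = π - x := by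
      rw [hx, Nat.cast_sub (by omega : t ≤ N)]
      field_simp
    rw [hmr, Real.cos_pi_sub, Real.sin_pi_sub, neg_div, abs_neg]
    exact hbound

noncomputable def auxCt (N n : ℕ) : ℝ :=
  Real.cos (π * (n : ℝ) / (N : ℝ)) / Real.sin (π * (n : ℝ) / (N : ℝ))

lemma aux_step1 (N κ : ℕ) (hN : N.Prime) (hN3 : 3 ≤ N) (hκ1 : 1 ≤ κ) (hκ2 : κ ≤ N - 1) :
    ∑ z ∈ Finset.Icc 1 (N - 1),
        (Int.fract ((κ : ℝ) * (z : ℝ) / (N : ℝ)) - 1 / 2)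
          * (Int.fract ((z : ℝ) / (N : ℝ)) - 1 / 2)
      = (1 / (4 * (N : ℝ) ^ 2)) * ∑ n ∈ Finset.Icc 1 (N - 1), ∑ m ∈ Finset.Icc 1 (N - 1),
          auxCt N n * auxCt N m *
            ∑ z ∈ Finset.Icc 1 (N - 1),
              Real.sin (2 * π * (n : ℝ) * ((κ * z : ℕ) : ℝ) / (N : ℝ))
                * Real.sin (2 * π * (m : ℝ) * (z : ℝ) / (N : ℝ)) := by
  have hz : ∀ z ∈ Finset.Icc 1 (N - 1),
      (Int.fract ((κ : ℝ) * (z : ℝ) / (N : ℝ)) - 1 / 2)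
          * (Int.fract ((z : ℝ) / (N : ℝ)) - 1 / 2)
        = (1 / (4 * (N : ℝ) ^ 2)) * ∑ n ∈ Finset.Icc 1 (N - 1), ∑ m ∈ Finset.Icc 1 (N - 1),
            auxCt N n * auxCt N m *
              (Real.sin (2 * π * (n : ℝ) * ((κ * z : ℕ) : ℝ) / (N : ℝ))
                * Real.sin (2 * π * (m : ℝ) * (z : ℝ) / (N : ℝ))) := by
    intro z hzmem
    simp only [Finset.mem_Icc] at hzmem
    have hd2 : ¬ N ∣ z := by
      intro h
      have := Nat.le_of_dvd (by omega) h
      omega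
    have hd1 : ¬ N ∣ κ * z := by
      intro h
      rcases (Nat.Prime.dvd_mul hN).mp h with h' | h'
      · have := Nat.le_of_dvd (by omega) h'
        omega
      · exact hd2 h'
    have e1 := aux_claimA N hN3 (κ * z) hd1
    have e2 := aux_claimA N hN3 z hd2
    have c1 : Int.fract ((κ : ℝ) * (z : ℝ) / (N : ℝ))
        = Int.fract (((κ * z : ℕ) : ℝ) / (N : ℝ)) := by
      push_cast
      ring_nf
    have hgen : ∀ X Y : ℝ,
        (-(1 / (2 * (N : ℝ))) * X) * (-(1 / (2 * (N : ℝ))) * Y)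
          = (1 / (4 * (N : ℝ) ^ 2)) * (X * Y) := by
      intro X Y; ring
    calc (Int.fract ((κ : ℝ) * (z : ℝ) / (N : ℝ)) - 1 / 2)
          * (Int.fract ((z : ℝ) / (N : ℝ)) - 1 / 2)
        = (-(1 / (2 * (N : ℝ))) * ∑ n ∈ Finset.Icc 1 (N - 1),
              auxCt N n * Real.sin (2 * π * (n : ℝ) * ((κ * z : ℕ) : ℝ) / (N : ℝ)))
          * (-(1 / (2 * (N : ℝ))) * ∑ m ∈ Finset.Icc 1 (N - 1),
              auxCt N m * Real.sin (2 * π * (m : ℝ) * (z : ℝ) / (N : ℝ))) := by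
          rw [c1, e1, e2]
          rfl
      _ = (1 / (4 * (N : ℝ) ^ 2)) * ((∑ n ∈ Finset.Icc 1 (N - 1),
              auxCt N n * Real.sin (2 * π * (n : ℝ) * ((κ * z : ℕ) : ℝ) / (N : ℝ)))
            * (∑ m ∈ Finset.Icc 1 (N - 1),
              auxCt N m * Real.sin (2 * π * (m : ℝ) * (z : ℝ) / (N : ℝ)))) := hgen _ _
      _ = (1 / (4 * (N : ℝ) ^ 2)) * ∑ n ∈ Finset.Icc 1 (N - 1), ∑ m ∈ Finset.Icc 1 (N - 1),
            auxCt N n * auxCt N m *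
              (Real.sin (2 * π * (n : ℝ) * ((κ * z : ℕ) : ℝ) / (N : ℝ))
                * Real.sin (2 * π * (m : ℝ) * (z : ℝ) / (N : ℝ))) := by
          rw [Finset.sum_mul_sum]
          congr 1
          refine Finset.sum_congr rfl fun n _ => Finset.sum_congr rfl fun m _ => by ring
  rw [Finset.sum_congr rfl hz, ← Finset.mul_sum]
  congr 1
  rw [Finset.sum_comm]
  refine Finset.sum_congr rfl fun n _ => ?_
  rw [Finset.sum_comm]
  refine Finset.sum_congr rfl fun m _ => ?_
  rw [Finset.mul_sum]

lemma aux_step2 (N κ : ℕ) (hN3 : 3 ≤ N) (n m : ℕ) :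
    ∑ z ∈ Finset.Icc 1 (N - 1),
        Real.sin (2 * π * (n : ℝ) * ((κ * z : ℕ) : ℝ) / (N : ℝ))
          * Real.sin (2 * π * (m : ℝ) * (z : ℝ) / (N : ℝ))
      = ((N : ℝ) / 2) *
          ((if (N : ℤ) ∣ ((n : ℤ) * κ - m) then (1 : ℝ) else 0)
            - (if (N : ℤ) ∣ ((n : ℤ) * κ + m) then (1 : ℝ) else 0)) := by
  have hz : ∀ z ∈ Finset.Icc 1 (N - 1),
      Real.sin (2 * π * (n : ℝ) * ((κ * z : ℕ) : ℝ) / (N : ℝ))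
          * Real.sin (2 * π * (m : ℝ) * (z : ℝ) / (N : ℝ))
        = (1 / 2) * (Real.cos (2 * π * ((((n : ℤ) * κ - m : ℤ)) : ℝ) * (z : ℝ) / (N : ℝ))
            - Real.cos (2 * π * ((((n : ℤ) * κ + m : ℤ)) : ℝ) * (z : ℝ) / (N : ℝ))) := by
    intro z _
    have e1 : 2 * π * ((((n : ℤ) * κ - m : ℤ)) : ℝ) * (z : ℝ) / (N : ℝ)
        = 2 * π * (n : ℝ) * ((κ * z : ℕ) : ℝ) / (N : ℝ)
          - 2 * π * (m : ℝ) * (z : ℝ) / (N : ℝ) := by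
      push_cast
      ring
    have e2 : 2 * π * ((((n : ℤ) * κ + m : ℤ)) : ℝ) * (z : ℝ) / (N : ℝ)
        = 2 * π * (n : ℝ) * ((κ * z : ℕ) : ℝ) / (N : ℝ)
          + 2 * π * (m : ℝ) * (z : ℝ) / (N : ℝ) := by
      push_cast
      ring
    rw [e1, e2, Real.cos_sub, Real.cos_add]
    ring
  rw [Finset.sum_congr rfl hz, ← Finset.mul_sum, Finset.sum_sub_distrib,
    aux_sum_cos_eq N hN3 ((n : ℤ) * κ - m), aux_sum_cos_eq N hN3 ((n : ℤ) * κ + m)]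
  split_ifs <;> ring


/-- `|J_{N;κ,1}| ≤ (1/(2π²))·(N/(N-1))·(T_N(κ) + 10π² ln N/(9N))`. -/
theorem abs_Jq_le (N : ℕ) (hN : N.Prime) (hN3 : 3 ≤ N)
    (κ : ℕ) (hκ : κ ∈ Finset.Icc 1 (N - 1))
    (r : ℤ → ℤ) (hr : ∀ j : ℤ, r j ≡ j [ZMOD (N : ℤ)] ∧ |r j| ≤ ((N : ℤ) - 1) / 2) :
    |Jq N κ 1| ≤ (1 / (2 * π ^ 2)) * ((N : ℝ) / ((N : ℝ) - 1)) *
      (TN N r κ + 10 * π ^ 2 * Real.log N / (9 * N)) := by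
  simp only [Finset.mem_Icc] at hκ
  obtain ⟨hκ1, hκ2⟩ := hκ
  have hπ := Real.pi_pos
  have hN0 : (N : ℝ) ≠ 0 := by positivity
  have hNpos : (0 : ℝ) < N := by positivity
  have hN1 : (1 : ℝ) < N := by exact_mod_cast (by omega : 1 < N)
  set M := (N - 1) / 2 with hM
  have hodd : N % 2 = 1 := by
    rcases hN.eq_two_or_odd with h | h
    · omega
    · exact h
  have hNM : N = 2 * M + 1 := by omega
  -- facts about r
  have hrdvd : ∀ j : ℤ, (N : ℤ) ∣ (j - r j) := fun j => (hr j).1.dvd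
  have hMeq : ((N : ℤ) - 1) / 2 = (M : ℤ) := by omega
  have hrabs : ∀ j : ℤ, |r j| ≤ (M : ℤ) := fun j => hMeq ▸ (hr j).2
  have uniq : ∀ a b : ℤ, (N : ℤ) ∣ (a - b) → |a| ≤ (M : ℤ) → |b| ≤ (M : ℤ) → a = b := by
    intro a b hd ha hb
    rw [abs_le] at ha hb
    have h0 : a - b = 0 := Int.eq_zero_of_abs_lt_dvd hd (by rw [abs_lt]; omega)
    omega
  have hr0 : ∀ j : ℤ, ¬ (N : ℤ) ∣ j → r j ≠ 0 := by
    intro j hj h0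
    apply hj
    have := hrdvd j
    rw [h0, sub_zero] at this
    exact this
  have RED : ∀ (m : ℕ) (b : ℤ), 1 ≤ m → m ≤ N - 1 → |b| ≤ (M : ℤ) →
      (N : ℤ) ∣ ((m : ℤ) - b) → (m = b.natAbs ∨ m = N - b.natAbs) := by
    intro m b hm1 hm2 hb hd
    obtain ⟨k, hk⟩ := hd
    rw [abs_le] at hb
    have hN3' : (3 : ℤ) ≤ (N : ℤ) := by exact_mod_cast hN3
    have hm1' : (1 : ℤ) ≤ (m : ℤ) := by exact_mod_cast hm1
    have hm2' : (m : ℤ) ≤ (N : ℤ) - 1 := by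
      have : (m : ℤ) ≤ ((N - 1 : ℕ) : ℤ) := by exact_mod_cast hm2
      omega
    have hMN : 2 * (M : ℤ) + 1 = (N : ℤ) := by
      have := congrArg (Nat.cast : ℕ → ℤ) hNM
      push_cast at this
      omega
    have hk01 : k = 0 ∨ k = 1 := by
      rcases le_or_gt k (-1) with h1 | h1
      · exfalso
        have hmul : (N : ℤ) * k ≤ (N : ℤ) * (-1) :=
          mul_le_mul_of_nonneg_left h1 (by omega)
        omega
      rcases le_or_gt 2 k with h2 | h2
      · exfalso
        have hmul : (N : ℤ) * 2 ≤ (N : ℤ) * k :=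
          mul_le_mul_of_nonneg_left h2 (by omega)
        omega
      omega
    have hbn := Int.natAbs_eq b
    rcases hk01 with rfl | rfl <;> rcases hbn with h | h <;> omega
  -- the reduced values are nonzero
  have hnd : ∀ n : ℕ, 1 ≤ n → n ≤ N - 1 → ¬ (N : ℤ) ∣ (n : ℤ) := by
    intro n h1 h2 hdvd
    rw [Int.natCast_dvd_natCast] at hdvd
    have := Nat.le_of_dvd (by omega) hdvd
    omega
  have hndκ : ∀ n : ℕ, 1 ≤ n → n ≤ N - 1 → ¬ (N : ℤ) ∣ ((n : ℤ) * κ) := by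
    intro n h1 h2 hdvd
    have h' : (N : ℤ) ∣ ((n * κ : ℕ) : ℤ) := by push_cast; exact hdvd
    rw [Int.natCast_dvd_natCast] at h'
    rcases (Nat.Prime.dvd_mul hN).mp h' with h'' | h''
    · have := Nat.le_of_dvd (by omega) h''
      omega
    · have := Nat.le_of_dvd (by omega) h''
      omega
  -- abbreviations
  have hσpos : ∀ n : ℕ, 1 ≤ n → n ≤ N - 1 → 1 ≤ (r (n : ℤ)).natAbs := by
    intro n h1 h2
    have := hr0 (n : ℤ) (hnd n h1 h2)
    omega
  have hρpos : ∀ n : ℕ, 1 ≤ n → n ≤ N - 1 → 1 ≤ (r ((n : ℤ) * κ)).natAbs := by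
    intro n h1 h2
    have := hr0 ((n : ℤ) * κ) (hndκ n h1 h2)
    omega
  have habs2 : ∀ j : ℤ, 2 * (r j).natAbs ≤ N - 1 := by
    intro j
    have h := hrabs j
    rcases Int.natAbs_eq (r j) with he | he <;> rw [abs_le] at h <;> omega
  -- cotangent bound for the n-index
  have hctn : ∀ n : ℕ, 1 ≤ n → n ≤ N - 1 →
      |auxCt N n| ≤ (N : ℝ) / (π * ((r (n : ℤ)).natAbs : ℝ)) := by
    intro n h1 h2
    exact aux_cot_bound N hN3 n _ (hσpos n h1 h2) (habs2 _)
      (RED n (r (n : ℤ)) h1 h2 (hrabs _) (hrdvd _))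
  -- cotangent bound for the reduced m-index
  have hctm : ∀ n : ℕ, 1 ≤ n → n ≤ N - 1 → ∀ m : ℕ, 1 ≤ m → m ≤ N - 1 →
      ((N : ℤ) ∣ ((n : ℤ) * κ - m) ∨ (N : ℤ) ∣ ((n : ℤ) * κ + m)) →
      |auxCt N m| ≤ (N : ℝ) / (π * ((r ((n : ℤ) * κ)).natAbs : ℝ)) := by
    intro n hn1 hn2 m hm1 hm2 hcase
    rcases hcase with hP | hQ
    · have hd : (N : ℤ) ∣ ((m : ℤ) - r ((n : ℤ) * κ)) := by
        have h1 := hrdvd ((n : ℤ) * κ)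
        have : (m : ℤ) - r ((n : ℤ) * κ)
            = ((n : ℤ) * κ - r ((n : ℤ) * κ)) - ((n : ℤ) * κ - m) := by ring
        rw [this]
        exact dvd_sub h1 hP
      exact aux_cot_bound N hN3 m _ (hρpos n hn1 hn2) (habs2 _)
        (RED m (r ((n : ℤ) * κ)) hm1 hm2 (hrabs _) hd)
    · have hd : (N : ℤ) ∣ ((m : ℤ) - (- r ((n : ℤ) * κ))) := by
        have h1 := hrdvd ((n : ℤ) * κ)
        have : (m : ℤ) - (- r ((n : ℤ) * κ))
            = ((n : ℤ) * κ + m) - ((n : ℤ) * κ - r ((n : ℤ) * κ)) := by ring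
        rw [this]
        exact dvd_sub hQ h1
      have hRED := RED m (- r ((n : ℤ) * κ)) hm1 hm2 (by rw [abs_neg]; exact hrabs _) hd
      rw [Int.natAbs_neg] at hRED
      exact aux_cot_bound N hN3 m _ (hρpos n hn1 hn2) (habs2 _) hRED
  -- indicator sums are at most 1
  have hind : ∀ a : ℤ, (∑ m ∈ Finset.Icc 1 (N - 1),
      (if (N : ℤ) ∣ (a - (m : ℤ)) then (1 : ℝ) else 0)) ≤ 1 := by
    intro a
    rw [Finset.sum_boole]
    have hcard : ((Finset.Icc 1 (N - 1)).filter (fun m : ℕ => (N : ℤ) ∣ (a - (m : ℤ)))).card ≤ 1 := by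
      rw [Finset.card_le_one]
      intro x hx y hy
      simp only [Finset.mem_filter, Finset.mem_Icc] at hx hy
      obtain ⟨⟨hx1, hx2⟩, hdx⟩ := hx
      obtain ⟨⟨hy1, hy2⟩, hdy⟩ := hy
      have hd : (N : ℤ) ∣ ((y : ℤ) - (x : ℤ)) := by
        have e : (y : ℤ) - (x : ℤ) = (a - x) - (a - y) := by ring
        rw [e]
        exact dvd_sub hdx hdy
      have h0 : (y : ℤ) - (x : ℤ) = 0 := Int.eq_zero_of_abs_lt_dvd hd (by rw [abs_lt]; omega)
      omega
    exact_mod_cast hcard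
  have hind' : ∀ a : ℤ, (∑ m ∈ Finset.Icc 1 (N - 1),
      (if (N : ℤ) ∣ (a + (m : ℤ)) then (1 : ℝ) else 0)) ≤ 1 := by
    intro a
    rw [Finset.sum_boole]
    have hcard : ((Finset.Icc 1 (N - 1)).filter (fun m : ℕ => (N : ℤ) ∣ (a + (m : ℤ)))).card ≤ 1 := by
      rw [Finset.card_le_one]
      intro x hx y hy
      simp only [Finset.mem_filter, Finset.mem_Icc] at hx hy
      obtain ⟨⟨hx1, hx2⟩, hdx⟩ := hx
      obtain ⟨⟨hy1, hy2⟩, hdy⟩ := hy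
      have hd : (N : ℤ) ∣ ((y : ℤ) - (x : ℤ)) := by
        have e : (y : ℤ) - (x : ℤ) = (a + y) - (a + x) := by ring
        rw [e]
        exact dvd_sub hdy hdx
      have h0 : (y : ℤ) - (x : ℤ) = 0 := Int.eq_zero_of_abs_lt_dvd hd (by rw [abs_lt]; omega)
      omega
    exact_mod_cast hcard
  -- bound on the inner m-sum
  have hIS : ∀ n : ℕ, 1 ≤ n → n ≤ N - 1 →
      |∑ m ∈ Finset.Icc 1 (N - 1), auxCt N m *
          ((if (N : ℤ) ∣ ((n : ℤ) * κ - m) then (1 : ℝ) else 0)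
            - (if (N : ℤ) ∣ ((n : ℤ) * κ + m) then (1 : ℝ) else 0))|
        ≤ 2 * ((N : ℝ) / (π * ((r ((n : ℤ) * κ)).natAbs : ℝ))) := by
    intro n hn1 hn2
    have hρ1 : (1 : ℝ) ≤ ((r ((n : ℤ) * κ)).natAbs : ℝ) := by
      exact_mod_cast hρpos n hn1 hn2
    have hB : (0 : ℝ) ≤ (N : ℝ) / (π * ((r ((n : ℤ) * κ)).natAbs : ℝ)) := by positivity
    calc |∑ m ∈ Finset.Icc 1 (N - 1), auxCt N m *
            ((if (N : ℤ) ∣ ((n : ℤ) * κ - m) then (1 : ℝ) else 0)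
              - (if (N : ℤ) ∣ ((n : ℤ) * κ + m) then (1 : ℝ) else 0))|
        ≤ ∑ m ∈ Finset.Icc 1 (N - 1), |auxCt N m *
            ((if (N : ℤ) ∣ ((n : ℤ) * κ - m) then (1 : ℝ) else 0)
              - (if (N : ℤ) ∣ ((n : ℤ) * κ + m) then (1 : ℝ) else 0))| :=
          Finset.abs_sum_le_sum_abs _ _
      _ ≤ ∑ m ∈ Finset.Icc 1 (N - 1),
            ((N : ℝ) / (π * ((r ((n : ℤ) * κ)).natAbs : ℝ))) *
              ((if (N : ℤ) ∣ ((n : ℤ) * κ - m) then (1 : ℝ) else 0)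
                + (if (N : ℤ) ∣ ((n : ℤ) * κ + m) then (1 : ℝ) else 0)) := by
          apply Finset.sum_le_sum
          intro m hm
          simp only [Finset.mem_Icc] at hm
          by_cases hP : (N : ℤ) ∣ ((n : ℤ) * κ - m)
          · by_cases hQ : (N : ℤ) ∣ ((n : ℤ) * κ + m)
            · rw [if_pos hP, if_pos hQ]
              norm_num
              positivity
            · rw [if_pos hP, if_neg hQ]
              norm_num
              simpa using hctm n hn1 hn2 m hm.1 hm.2 (Or.inl hP)
          · by_cases hQ : (N : ℤ) ∣ ((n : ℤ) * κ + m)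
            · rw [if_neg hP, if_pos hQ]
              norm_num
              simpa using hctm n hn1 hn2 m hm.1 hm.2 (Or.inr hQ)
            · rw [if_neg hP, if_neg hQ]
              norm_num
      _ = ((N : ℝ) / (π * ((r ((n : ℤ) * κ)).natAbs : ℝ))) *
            ((∑ m ∈ Finset.Icc 1 (N - 1),
                (if (N : ℤ) ∣ ((n : ℤ) * κ - m) then (1 : ℝ) else 0))
              + (∑ m ∈ Finset.Icc 1 (N - 1),
                (if (N : ℤ) ∣ ((n : ℤ) * κ + m) then (1 : ℝ) else 0))) := by
          rw [← Finset.sum_add_distrib, ← Finset.mul_sum]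
      _ ≤ ((N : ℝ) / (π * ((r ((n : ℤ) * κ)).natAbs : ℝ))) * (1 + 1) := by
          apply mul_le_mul_of_nonneg_left _ hB
          have h1 := hind ((n : ℤ) * κ)
          have h2 := hind' ((n : ℤ) * κ)
          linarith
      _ = 2 * ((N : ℝ) / (π * ((r ((n : ℤ) * κ)).natAbs : ℝ))) := by ring
  -- combined identity
  have hcombined : ∑ z ∈ Finset.Icc 1 (N - 1),
      (Int.fract ((κ : ℝ) * (z : ℝ) / (N : ℝ)) - 1 / 2)
        * (Int.fract ((z : ℝ) / (N : ℝ)) - 1 / 2)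
      = (1 / (4 * (N : ℝ) ^ 2)) * ∑ n ∈ Finset.Icc 1 (N - 1),
          auxCt N n * ((N : ℝ) / 2) *
            (∑ m ∈ Finset.Icc 1 (N - 1), auxCt N m *
              ((if (N : ℤ) ∣ ((n : ℤ) * κ - m) then (1 : ℝ) else 0)
                - (if (N : ℤ) ∣ ((n : ℤ) * κ + m) then (1 : ℝ) else 0))) := by
    rw [aux_step1 N κ hN hN3 hκ1 hκ2]
    congr 1
    refine Finset.sum_congr rfl fun n _ => ?_
    calc ∑ m ∈ Finset.Icc 1 (N - 1), auxCt N n * auxCt N m *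
            ∑ z ∈ Finset.Icc 1 (N - 1),
              Real.sin (2 * π * (n : ℝ) * ((κ * z : ℕ) : ℝ) / (N : ℝ))
                * Real.sin (2 * π * (m : ℝ) * (z : ℝ) / (N : ℝ))
        = ∑ m ∈ Finset.Icc 1 (N - 1), auxCt N n * ((N : ℝ) / 2) * (auxCt N m *
            ((if (N : ℤ) ∣ ((n : ℤ) * κ - m) then (1 : ℝ) else 0)
              - (if (N : ℤ) ∣ ((n : ℤ) * κ + m) then (1 : ℝ) else 0))) := by
          refine Finset.sum_congr rfl fun m _ => ?_
          rw [aux_step2 N κ hN3 n m]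
          ring
      _ = auxCt N n * ((N : ℝ) / 2) *
            (∑ m ∈ Finset.Icc 1 (N - 1), auxCt N m *
              ((if (N : ℤ) ∣ ((n : ℤ) * κ - m) then (1 : ℝ) else 0)
                - (if (N : ℤ) ∣ ((n : ℤ) * κ + m) then (1 : ℝ) else 0))) := by
          rw [Finset.mul_sum]
  -- main bound
  have habs : |∑ z ∈ Finset.Icc 1 (N - 1),
      (Int.fract ((κ : ℝ) * (z : ℝ) / (N : ℝ)) - 1 / 2)
        * (Int.fract ((z : ℝ) / (N : ℝ)) - 1 / 2)|
      ≤ ((N : ℝ) / (4 * π ^ 2)) * ∑ n ∈ Finset.Icc 1 (N - 1),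
          1 / (((r (n : ℤ)).natAbs : ℝ) * ((r ((n : ℤ) * κ)).natAbs : ℝ)) := by
    rw [hcombined, abs_mul, abs_of_nonneg (show (0 : ℝ) ≤ 1 / (4 * (N : ℝ) ^ 2) by positivity)]
    calc (1 / (4 * (N : ℝ) ^ 2)) * |∑ n ∈ Finset.Icc 1 (N - 1),
            auxCt N n * ((N : ℝ) / 2) *
              (∑ m ∈ Finset.Icc 1 (N - 1), auxCt N m *
                ((if (N : ℤ) ∣ ((n : ℤ) * κ - m) then (1 : ℝ) else 0)
                  - (if (N : ℤ) ∣ ((n : ℤ) * κ + m) then (1 : ℝ) else 0)))|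
        ≤ (1 / (4 * (N : ℝ) ^ 2)) * ∑ n ∈ Finset.Icc 1 (N - 1),
            |auxCt N n * ((N : ℝ) / 2) *
              (∑ m ∈ Finset.Icc 1 (N - 1), auxCt N m *
                ((if (N : ℤ) ∣ ((n : ℤ) * κ - m) then (1 : ℝ) else 0)
                  - (if (N : ℤ) ∣ ((n : ℤ) * κ + m) then (1 : ℝ) else 0)))| :=
          mul_le_mul_of_nonneg_left (Finset.abs_sum_le_sum_abs _ _) (by positivity)
      _ ≤ (1 / (4 * (N : ℝ) ^ 2)) * ∑ n ∈ Finset.Icc 1 (N - 1),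
            ((N : ℝ) / (π * ((r (n : ℤ)).natAbs : ℝ))) * ((N : ℝ) / 2)
              * (2 * ((N : ℝ) / (π * ((r ((n : ℤ) * κ)).natAbs : ℝ)))) := by
          apply mul_le_mul_of_nonneg_left _ (by positivity)
          apply Finset.sum_le_sum
          intro n hn
          simp only [Finset.mem_Icc] at hn
          rw [abs_mul, abs_mul, abs_of_nonneg (show (0 : ℝ) ≤ (N : ℝ) / 2 by positivity)]
          have b1 := hctn n hn.1 hn.2
          have b2 := hIS n hn.1 hn.2
          have hbn : (0 : ℝ) ≤ (N : ℝ) / (π * ((r (n : ℤ)).natAbs : ℝ)) := by positivity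
          apply mul_le_mul
          · exact mul_le_mul_of_nonneg_right b1 (by positivity)
          · exact b2
          · exact abs_nonneg _
          · positivity
      _ = ((N : ℝ) / (4 * π ^ 2)) * ∑ n ∈ Finset.Icc 1 (N - 1),
            1 / (((r (n : ℤ)).natAbs : ℝ) * ((r ((n : ℤ) * κ)).natAbs : ℝ)) := by
          rw [Finset.mul_sum, Finset.mul_sum]
          refine Finset.sum_congr rfl fun n hn => ?_
          simp only [Finset.mem_Icc] at hn
          have hσ1 : (1 : ℝ) ≤ ((r (n : ℤ)).natAbs : ℝ) := by
            exact_mod_cast hσpos n hn.1 hn.2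
          have hρ1 : (1 : ℝ) ≤ ((r ((n : ℤ) * κ)).natAbs : ℝ) := by
            exact_mod_cast hρpos n hn.1 hn.2
          have hπ0 : π ≠ 0 := ne_of_gt hπ
          have hσ0 : ((r (n : ℤ)).natAbs : ℝ) ≠ 0 := by linarith
          have hρ0 : ((r ((n : ℤ) * κ)).natAbs : ℝ) ≠ 0 := by linarith
          field_simp
  -- cast of natAbs
  have hρcast : ∀ q : ℕ, ((r ((q : ℤ) * κ)).natAbs : ℝ) = |((r ((q : ℤ) * κ) : ℤ) : ℝ)| := by
    intro q
    rw [Nat.cast_natAbs]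
    exact_mod_cast rfl
  -- pairing n ↔ N - n
  have hpair : ∑ n ∈ Finset.Icc 1 (N - 1),
      1 / (((r (n : ℤ)).natAbs : ℝ) * ((r ((n : ℤ) * κ)).natAbs : ℝ))
      = 2 * TN N r κ := by
    have hunion : Finset.Icc 1 (N - 1) = Finset.Icc 1 M ∪ Finset.Icc (M + 1) (N - 1) := by
      ext x
      simp only [Finset.mem_Icc, Finset.mem_union]
      omega
    have hdisj : Disjoint (Finset.Icc 1 M) (Finset.Icc (M + 1) (N - 1)) := by
      rw [Finset.disjoint_left]
      intro x hx hy
      simp only [Finset.mem_Icc] at hx hy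
      omega
    rw [hunion, Finset.sum_union hdisj]
    have h1 : ∑ q ∈ Finset.Icc 1 M,
        1 / (((r (q : ℤ)).natAbs : ℝ) * ((r ((q : ℤ) * κ)).natAbs : ℝ)) = TN N r κ := by
      rw [TN, ← hM]
      refine Finset.sum_congr rfl fun q hq => ?_
      simp only [Finset.mem_Icc] at hq
      have hrq : r (q : ℤ) = (q : ℤ) := by
        apply uniq
        · have h := hrdvd (q : ℤ)
          have e : r (q : ℤ) - (q : ℤ) = -((q : ℤ) - r (q : ℤ)) := by ring
          rw [e]
          exact dvd_neg.mpr h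
        · exact hrabs _
        · rw [abs_of_nonneg (by positivity : (0 : ℤ) ≤ (q : ℤ))]
          exact_mod_cast hq.2
      rw [hrq, hρcast q]
      simp
    have h2 : ∑ n ∈ Finset.Icc (M + 1) (N - 1),
        1 / (((r (n : ℤ)).natAbs : ℝ) * ((r ((n : ℤ) * κ)).natAbs : ℝ)) = TN N r κ := by
      rw [TN, ← hM]
      refine Finset.sum_nbij' (i := fun n => N - n) (j := fun q => N - q)
        ?_ ?_ ?_ ?_ ?_
      · intro a ha
        simp only [Finset.mem_Icc] at ha ⊢
        omega
      · intro a ha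
        simp only [Finset.mem_Icc] at ha ⊢
        omega
      · intro a ha
        simp only [Finset.mem_Icc] at ha
        show N - (N - a) = a
        omega
      · intro a ha
        simp only [Finset.mem_Icc] at ha
        show N - (N - a) = a
        omega
      · intro n hn
        simp only [Finset.mem_Icc] at hn
        have hcastNn : ((N - n : ℕ) : ℤ) = (N : ℤ) - (n : ℤ) := by omega
        have hσn : r (n : ℤ) = (n : ℤ) - N := by
          apply uniq
          · have h := hrdvd (n : ℤ)
            have e : r (n : ℤ) - ((n : ℤ) - N) = -((n : ℤ) - r (n : ℤ)) + N := by ring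
            rw [e]
            exact dvd_add (dvd_neg.mpr h) dvd_rfl
          · exact hrabs _
          · rw [abs_le]
            omega
        have hρn : r ((n : ℤ) * κ) = - r (((N - n : ℕ) : ℤ) * κ) := by
          apply uniq
          · have h1 := hrdvd ((n : ℤ) * κ)
            have h2 := hrdvd ((((N - n : ℕ) : ℤ)) * κ)
            have e : r ((n : ℤ) * κ) - (- r (((N - n : ℕ) : ℤ) * κ))
                = -((n : ℤ) * κ - r ((n : ℤ) * κ))
                  - ((((N - n : ℕ) : ℤ) * κ) - r (((N - n : ℕ) : ℤ) * κ))
                  + ((n : ℤ) + ((N - n : ℕ) : ℤ)) * κ := by ring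
            rw [e]
            refine dvd_add (dvd_sub (dvd_neg.mpr h1) h2) ?_
            have e2 : ((n : ℤ) + ((N - n : ℕ) : ℤ)) * κ = (N : ℤ) * κ := by
              rw [hcastNn]; ring
            rw [e2]
            exact dvd_mul_right _ _
          · exact hrabs _
          · rw [abs_neg]
            exact hrabs _
        -- value equality
        have hσval : ((r (n : ℤ)).natAbs : ℝ) = ((N - n : ℕ) : ℝ) := by
          rw [hσn]
          have : ((n : ℤ) - N).natAbs = N - n := by omega
          rw [this]
        have hρval : ((r ((n : ℤ) * κ)).natAbs : ℝ)
            = ((r (((N - n : ℕ) : ℤ) * κ)).natAbs : ℝ) := by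
          rw [hρn, Int.natAbs_neg]
        rw [hσval, hρval, hρcast (N - n)]
    rw [h1, h2]
    ring
  -- nonnegativity facts
  have hTN0 : (0 : ℝ) ≤ TN N r κ := by
    rw [TN]
    apply Finset.sum_nonneg
    intro q hq
    positivity
  have herr : (0 : ℝ) ≤ 10 * π ^ 2 * Real.log N / (9 * N) := by
    have hlog : (0 : ℝ) ≤ Real.log N := Real.log_nonneg (by linarith)
    positivity
  have hN1' : (0 : ℝ) < (N : ℝ) - 1 := by linarith
  -- rewrite Jq
  have hJ : Jq N κ 1 = (1 / ((N : ℝ) - 1)) * ∑ z ∈ Finset.Icc 1 (N - 1),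
      (Int.fract ((κ : ℝ) * (z : ℝ) / (N : ℝ)) - 1 / 2)
        * (Int.fract ((z : ℝ) / (N : ℝ)) - 1 / 2) := by
    rw [Jq]
    congr 1
    refine Finset.sum_congr rfl fun z hz => ?_
    norm_num
  rw [hJ, abs_mul, abs_of_nonneg (show (0 : ℝ) ≤ 1 / ((N : ℝ) - 1) by positivity)]
  have hA : (0 : ℝ) ≤ (1 / (2 * π ^ 2)) * ((N : ℝ) / ((N : ℝ) - 1)) := by positivity
  calc (1 / ((N : ℝ) - 1)) * |∑ z ∈ Finset.Icc 1 (N - 1),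
          (Int.fract ((κ : ℝ) * (z : ℝ) / (N : ℝ)) - 1 / 2)
            * (Int.fract ((z : ℝ) / (N : ℝ)) - 1 / 2)|
      ≤ (1 / ((N : ℝ) - 1)) * (((N : ℝ) / (4 * π ^ 2)) * (2 * TN N r κ)) := by
        apply mul_le_mul_of_nonneg_left _ (by positivity)
        rw [← hpair]
        exact habs
    _ = (1 / (2 * π ^ 2)) * ((N : ℝ) / ((N : ℝ) - 1)) * TN N r κ := by
        field_simp
        ring
    _ ≤ (1 / (2 * π ^ 2)) * ((N : ℝ) / ((N : ℝ) - 1)) *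
          (TN N r κ + 10 * π ^ 2 * Real.log N / (9 * N)) := by
        have := mul_nonneg hA herr
        nlinarith
end
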